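/- arXiv:2410.17224 — 9 statements merged into one kernel-verified Lean document; each statement's English description precedes it below -/
import Mathlib

section
/- Let U, V ⊆ ℂ be open sets, let x : U → V be holomorphic with x'(z) ≠ 0 for every z ∈ U, let ℏ ∈ ℂ, let Q : V → ℂ be a function, and let Y : V → ℂ be holomorphic satisfying ℏ·Y'(w) = Y(w)² − Q(w) for all w ∈ V. Define Ỹ(z) := Y(x(z))·x'(z) + (ℏ/2)·x''(z)/x'(z) and Q̃(z) := Q(x(z))·x'(z)² − (ℏ²/2)·(x'''(z)/x'(z) − (3/2)·(x''(z)/x'(z))²). Then ℏ·Ỹ'(z) = Ỹ(z)² − Q̃(z) for all z ∈ U. -/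
/-- Coordinate transformation law of the Riccati equation `ℏ∂Y = Y² − Q`:
the Riccati unknown fails to transform as a differential form exactly by the
first-order term `(ℏ/2)·x''/x'`, and the potential transforms as a quadratic
differential up to an `ℏ²`-Schwarzian correction. -/
theorem riccati_transformation_law
    (U V : Set ℂ) (hU : IsOpen U) (hV : IsOpen V)
    (x : ℂ → ℂ) (hxV : Set.MapsTo x U V)
    (hx : ∀ z ∈ U, DifferentiableAt ℂ x z)
    (hx' : ∀ z ∈ U, deriv x z ≠ 0)
    (ℏ : ℂ) (Q : ℂ → ℂ) (Y : ℂ → ℂ)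
    (hY : ∀ w ∈ V, DifferentiableAt ℂ Y w)
    (hRic : ∀ w ∈ V, ℏ * deriv Y w = Y w ^ 2 - Q w)
    (Yt Qt : ℂ → ℂ)
    (hYt : ∀ z, Yt z = Y (x z) * deriv x z + (ℏ / 2) * (deriv (deriv x) z / deriv x z))
    (hQt : ∀ z, Qt z = Q (x z) * (deriv x z) ^ 2
      - (ℏ ^ 2 / 2) * (deriv (deriv (deriv x)) z / deriv x z
        - (3 / 2) * (deriv (deriv x) z / deriv x z) ^ 2)) :
    ∀ z ∈ U, ℏ * deriv Yt z = Yt z ^ 2 - Qt z := by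
  intro z hz
  have hxU : DifferentiableOn ℂ x U := fun w hw => (hx w hw).differentiableWithinAt
  have hA : AnalyticOnNhd ℂ x U := hxU.analyticOnNhd hU
  have hA1 : AnalyticOnNhd ℂ (deriv x) U := hA.deriv
  have hA2 : AnalyticOnNhd ℂ (deriv (deriv x)) U := hA1.deriv
  have hd1 : DifferentiableAt ℂ (deriv x) z := (hA1 z hz).differentiableAt
  have hd2 : DifferentiableAt ℂ (deriv (deriv x)) z := (hA2 z hz).differentiableAt
  have hdx : DifferentiableAt ℂ x z := hx z hz
  have hYx : DifferentiableAt ℂ Y (x z) := hY (x z) (hxV hz)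
  have hx'z : deriv x z ≠ 0 := hx' z hz
  have hfun : Yt = fun z => Y (x z) * deriv x z
      + (ℏ / 2) * (deriv (deriv x) z / deriv x z) := funext hYt
  have hcomp : DifferentiableAt ℂ (fun z => Y (x z)) z := hYx.comp z hdx
  have hdcomp : deriv (fun z => Y (x z)) z = deriv Y (x z) * deriv x z :=
    deriv_comp z hYx hdx
  have hmul : DifferentiableAt ℂ (fun z => Y (x z) * deriv x z) z := hcomp.mul hd1
  have hdivD : DifferentiableAt ℂ (fun z => deriv (deriv x) z / deriv x z) z :=
    hd2.div hd1 hx'z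
  have hderiv : deriv Yt z
      = (deriv Y (x z) * deriv x z) * deriv x z + Y (x z) * deriv (deriv x) z
        + (ℏ / 2) * ((deriv (deriv (deriv x)) z * deriv x z
            - deriv (deriv x) z * deriv (deriv x) z) / deriv x z ^ 2) := by
    rw [hfun, deriv_fun_add hmul (show DifferentiableAt ℂ
        (fun z => ℏ / 2 * (deriv (deriv x) z / deriv x z)) z from
        (differentiableAt_const _).mul hdivD),
      deriv_fun_mul hcomp hd1, hdcomp, deriv_const_mul _ hdivD,
      deriv_fun_div hd2 hd1 hx'z]
  have hR := hRic (x z) (hxV hz)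
  have hs : deriv x z * (deriv x z)⁻¹ = 1 := mul_inv_cancel₀ hx'z
  rw [hderiv, hYt z, hQt z]
  simp only [div_eq_mul_inv, ← inv_pow]
  linear_combination (deriv x z ^ 2) * hR
    + ((ℏ ^ 2 / 2) * deriv (deriv (deriv x)) z * (deriv x z)⁻¹
        - ℏ * Y (x z) * deriv (deriv x) z) * hs
end

section
/- Let f be holomorphic on an open neighbourhood of 0 in ℂ with f(0) ≠ 0. Then there exist an open set V ⊆ ℂ containing 0 and an injective holomorphic map w : V → ℂ with w(0) = 0 and w'(0) ≠ 0 such that f(z)/z² = f(0)·w'(z)²/w(z)² for every z ∈ V with z ≠ 0. -/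
open Metric Filter Set
open scoped Topology NNReal ENNReal

/-- Every function analytic at `0` has a primitive on a small ball around `0`. -/
lemma exists_primitive_aux {g : ℂ → ℂ} (hg : AnalyticAt ℂ g 0) :
    ∃ ρ : ℝ, 0 < ρ ∧ ∃ P : ℂ → ℂ, P 0 = 0 ∧
      ∀ z ∈ Metric.ball (0 : ℂ) ρ, HasDerivAt P (g z) z := by
  obtain ⟨p, r, hp⟩ := hg
  obtain ⟨ρ, hρl, hρr⟩ := ENNReal.lt_iff_exists_nnreal_btwn.mp hp.r_pos
  have hρ0 : 0 < (ρ : ℝ) := by exact_mod_cast hρl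
  have hrad : (ρ : ℝ≥0∞) < p.radius := lt_of_lt_of_le hρr hp.r_le
  have hS : Summable fun n => ‖p n‖ * (ρ : ℝ) ^ n := p.summable_norm_mul_pow hrad
  set G : ℕ → ℂ → ℂ := fun n z => ((n : ℂ) + 1)⁻¹ * p.coeff n * z ^ (n + 1) with hG
  set G' : ℕ → ℂ → ℂ := fun n z => p.coeff n * z ^ n with hG'
  have hder : ∀ n, ∀ y : ℂ, HasDerivAt (G n) (G' n y) y := by
    intro n y
    have h1 : HasDerivAt (fun z : ℂ => z ^ (n + 1)) (((n : ℂ) + 1) * y ^ n) y := by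
      simpa using hasDerivAt_pow (n + 1) y
    have h2 := h1.const_mul (((n : ℂ) + 1)⁻¹ * p.coeff n)
    refine h2.congr_deriv ?_
    have hne : ((n : ℂ) + 1) ≠ 0 := Nat.cast_add_one_ne_zero n
    simp only [hG']
    linear_combination (p.coeff n * y ^ n) * (inv_mul_cancel₀ hne)
  have hbound : ∀ n, ∀ y ∈ Metric.ball (0 : ℂ) (ρ : ℝ), ‖G' n y‖ ≤ ‖p n‖ * (ρ : ℝ) ^ n := by
    intro n y hy
    have hy' : ‖y‖ ≤ (ρ : ℝ) := le_of_lt (mem_ball_zero_iff.mp hy)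
    have hc : ‖p.coeff n‖ ≤ ‖p n‖ := by
      calc ‖p.coeff n‖ = ‖p n (fun _ => (1 : ℂ))‖ := rfl
        _ ≤ ‖p n‖ * ∏ _i : Fin n, ‖(1 : ℂ)‖ := (p n).le_opNorm _
        _ = ‖p n‖ := by simp
    calc ‖G' n y‖ = ‖p.coeff n‖ * ‖y‖ ^ n := by
          show ‖p.coeff n * y ^ n‖ = _
          rw [norm_mul, norm_pow]
      _ ≤ ‖p n‖ * (ρ : ℝ) ^ n :=
        mul_le_mul hc (pow_le_pow_left₀ (norm_nonneg _) hy' n) (by positivity) (norm_nonneg _)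
  have hg0 : Summable fun n => G n 0 := by
    have : (fun n => G n 0) = fun _ => (0 : ℂ) := by funext n; simp [hG]
    rw [this]; exact summable_zero
  refine ⟨(ρ : ℝ), hρ0, fun z => ∑' n, G n z, ?_, ?_⟩
  · have hzero : ∀ n, G n 0 = 0 := fun n => by simp [hG]
    simp only [hzero, tsum_zero]
  · intro z hz
    have hd := hasDerivAt_tsum_of_isPreconnected hS isOpen_ball
      (convex_ball (0 : ℂ) (ρ : ℝ)).isPreconnected (fun n y _ => hder n y) hbound
      (mem_ball_self hρ0) hg0 hz
    have hz' : z ∈ Metric.eball (0 : ℂ) r := by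
      rw [Metric.mem_eball, edist_zero_right]
      have h1 : ‖z‖₊ < ρ := by exact_mod_cast mem_ball_zero_iff.mp hz
      exact lt_trans (by exact_mod_cast h1) hρr
    have hsum : HasSum (fun n => G' n z) (g z) := by
      have h := hp.hasSum hz'
      simp only [zero_add] at h
      have he : (fun n => p n fun _ => z) = fun n => G' n z := by
        funext n
        simp [hG', FormalMultilinearSeries.apply_eq_pow_smul_coeff, smul_eq_mul, mul_comm]
      rwa [he] at h
    rwa [hsum.tsum_eq] at hd

/-- Local normal form of a quadratic differential `f(z)·z^{−2}·dz²` at a double pole: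
there is a local coordinate change `w`, fixing `0` with `w'(0) ≠ 0`, such that
`f(z)/z² = f(0)·w'(z)²/w(z)²` near `0` (where `r = f(0)` is the quadratic residue). -/
theorem quadratic_differential_normal_form_double_pole
    (U : Set ℂ) (hU : IsOpen U) (h0U : (0 : ℂ) ∈ U)
    (f : ℂ → ℂ) (hf : DifferentiableOn ℂ f U) (hf0 : f 0 ≠ 0) :
    ∃ V : Set ℂ, IsOpen V ∧ (0 : ℂ) ∈ V ∧ V ⊆ U ∧
      ∃ w : ℂ → ℂ, Set.InjOn w V ∧ DifferentiableOn ℂ w V ∧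
        w 0 = 0 ∧ deriv w 0 ≠ 0 ∧
        ∀ z ∈ V, z ≠ 0 → f z / z ^ 2 = f 0 * (deriv w z) ^ 2 / w z ^ 2 := by
  have hfa : AnalyticAt ℂ f 0 := hf.analyticAt (hU.mem_nhds h0U)
  have hfc : ContinuousAt f 0 := hfa.continuousAt
  set h : ℂ → ℂ := fun z => Complex.exp (Complex.log (f z / f 0) / 2) with hh_def
  have hh_an : AnalyticAt ℂ h 0 := by
    apply analyticAt_cexp.comp
    apply AnalyticAt.div ?_ analyticAt_const two_ne_zero
    exact (analyticAt_clog (by simp [div_self hf0, Complex.one_mem_slitPlane])).comp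
      (hfa.div analyticAt_const hf0)
  have hh0 : h 0 = 1 := by simp [hh_def, div_self hf0, Complex.log_one]
  have hsq : ∀ z : ℂ, f z ≠ 0 → h z ^ 2 = f z / f 0 := by
    intro z hz
    have hu : f z / f 0 ≠ 0 := div_ne_zero hz hf0
    show Complex.exp (Complex.log (f z / f 0) / 2) ^ 2 = f z / f 0
    rw [sq, ← Complex.exp_add, add_halves, Complex.exp_log hu]
  obtain ⟨p, hp⟩ := hh_an
  set q : ℂ → ℂ := dslope h 0 with hq_def
  have hq_an : AnalyticAt ℂ q 0 := hp.has_fpower_series_dslope_fslope.analyticAt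
  have hq : ∀ z : ℂ, 1 + z * q z = h z := by
    intro z
    rcases eq_or_ne z 0 with rfl | hz
    · simp [hh0]
    · rw [hq_def, dslope_of_ne _ hz, slope_def_field, hh0]
      field_simp
      ring
  obtain ⟨ρ, hρ, P, hP0, hP⟩ := exists_primitive_aux hq_an
  set w : ℂ → ℂ := fun z => z * Complex.exp (P z) with hw_def
  have hwd : ∀ z ∈ Metric.ball (0 : ℂ) ρ, HasDerivAt w (Complex.exp (P z) * h z) z := by
    intro z hz
    have h1 : HasDerivAt (fun z => Complex.exp (P z)) (Complex.exp (P z) * q z) z :=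
      (hP z hz).cexp
    have h2 := (hasDerivAt_id z).mul h1
    refine (h2 : HasDerivAt w _ z).congr_deriv ?_
    rw [← hq z]; simp only [id_eq]; ring
  have hw0der : HasDerivAt w 1 0 := by
    have := hwd 0 (mem_ball_self hρ)
    simpa [hP0, hh0] using this
  have hPd : DifferentiableOn ℂ P (Metric.ball (0 : ℂ) ρ) :=
    fun z hz => (hP z hz).differentiableAt.differentiableWithinAt
  have hP_an : AnalyticAt ℂ P 0 := hPd.analyticAt (isOpen_ball.mem_nhds (mem_ball_self hρ))
  have hw_an : AnalyticAt ℂ w 0 := analyticAt_id.mul (analyticAt_cexp.comp hP_an)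
  obtain ⟨pw, hpw⟩ := hw_an
  have hs : HasStrictDerivAt w 1 0 := by
    have hs' := hpw.hasStrictDerivAt
    have hc : (pw 1 fun _ => 1) = 1 := hs'.hasDerivAt.unique hw0der
    rwa [hc] at hs'
  have heq := (hs.hasStrictFDerivAt_equiv one_ne_zero).eventually_left_inverse
  obtain ⟨t, ht_sub, ht_open, ht0⟩ := _root_.mem_nhds_iff.mp heq
  have hne : ∀ᶠ z in 𝓝 (0 : ℂ), f z ≠ 0 := hfc.eventually_ne hf0
  have hmem : (U ∩ t ∩ Metric.ball (0 : ℂ) ρ ∩ {z | f z ≠ 0}) ∈ 𝓝 (0 : ℂ) := by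
    refine Filter.inter_mem (Filter.inter_mem (Filter.inter_mem (hU.mem_nhds h0U)
      (ht_open.mem_nhds ht0)) (Metric.ball_mem_nhds _ hρ)) hne
  obtain ⟨ε, hε0, hεsub⟩ := Metric.mem_nhds_iff.mp hmem
  refine ⟨Metric.ball 0 ε, isOpen_ball, mem_ball_self hε0,
    fun z hz => (hεsub hz).1.1.1, w, ?_, ?_, by simp [hw_def], ?_, ?_⟩
  · intro a ha b hb hab
    have h1 := ht_sub (hεsub ha).1.1.2
    have h2 := ht_sub (hεsub hb).1.1.2
    rw [← h1, ← h2, hab]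
  · exact fun z hz =>
      ((hwd z (hεsub hz).1.2).differentiableAt).differentiableWithinAt
  · rw [hw0der.deriv]; exact one_ne_zero
  · intro z hzV hz0
    have hzρ : z ∈ Metric.ball (0 : ℂ) ρ := (hεsub hzV).1.2
    have hfz : f z ≠ 0 := (hεsub hzV).2
    rw [(hwd z hzρ).deriv]
    have hexp : Complex.exp (P z) ≠ 0 := Complex.exp_ne_zero _
    have hfz' : f 0 * h z ^ 2 = f z := by
      rw [hsq z hfz]; field_simp
    show f z / z ^ 2 = f 0 * (Complex.exp (P z) * h z) ^ 2 / (z * Complex.exp (P z)) ^ 2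
    rw [div_eq_div_iff (pow_ne_zero 2 hz0) (pow_ne_zero 2 (mul_ne_zero hz0 hexp))]
    linear_combination (-(z ^ 2 * Complex.exp (P z) ^ 2)) * hfz'
end

section
/- Let k ≥ 2 be an integer and let f be holomorphic on an open neighbourhood of 0 in ℂ with f(0) ≠ 0. Then there exist an open set V ⊆ ℂ containing 0, an injective holomorphic map w : V → ℂ with w(0) = 0 and w'(0) ≠ 0, and a constant b ∈ ℂ, such that f(z)/z^{2k} = (1 + b·w(z)^{k−1})²·w'(z)²/w(z)^{2k} for every z ∈ V with z ≠ 0. -/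
open Filter Topology Complex FormalMultilinearSeries

lemma exists_analytic_sqrt (f : ℂ → ℂ) (hf : AnalyticAt ℂ f 0) (hf0 : f 0 ≠ 0) :
    ∃ g : ℂ → ℂ, AnalyticAt ℂ g 0 ∧ g 0 ^ 2 = f 0 ∧ ∀ᶠ z in 𝓝 (0:ℂ), g z ^ 2 = f z := by
  set c : ℂ := Complex.exp (Complex.log (f 0) / 2) with hc
  refine ⟨fun z => c * Complex.exp (Complex.log (f z / f 0) / 2), ?_, ?_, ?_⟩
  · apply analyticAt_const.mul
    apply (analyticAt_cexp.comp ?_)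
    apply AnalyticAt.div ?_ analyticAt_const two_ne_zero
    apply analyticAt_clog ?_ |>.comp (hf.div analyticAt_const hf0)
    simp [div_self hf0, Complex.one_mem_slitPlane]
  · have : (c * Complex.exp (Complex.log ((f 0) / f 0) / 2)) ^ 2
        = c ^ 2 * Complex.exp (Complex.log ((f 0) / f 0) / 2) ^ 2 := by ring
    rw [this, hc, ← Complex.exp_nat_mul, ← Complex.exp_nat_mul]
    simp only [div_self hf0]
    push_cast
    rw [mul_div_cancel₀ _ (two_ne_zero), mul_div_cancel₀ _ (two_ne_zero),
      Complex.exp_log hf0, Complex.log_one]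
    simp
  · have hcont : ContinuousAt f 0 := hf.continuousAt
    filter_upwards [hcont.eventually_ne hf0] with z hz
    have : (c * Complex.exp (Complex.log (f z / f 0) / 2)) ^ 2
        = c ^ 2 * Complex.exp (Complex.log (f z / f 0) / 2) ^ 2 := by ring
    rw [this, hc, ← Complex.exp_nat_mul, ← Complex.exp_nat_mul]
    push_cast
    rw [mul_div_cancel₀ _ (two_ne_zero), mul_div_cancel₀ _ (two_ne_zero),
      Complex.exp_log hf0, Complex.exp_log (div_ne_zero hz hf0)]
    field_simp

lemma exists_euler_solution (k : ℕ) (hk : 2 ≤ k) (g : ℂ → ℂ) (hg : AnalyticAt ℂ g 0) :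
    ∃ h : ℂ → ℂ, ∃ b : ℂ, AnalyticAt ℂ h 0 ∧ ((1 : ℂ) - k) * h 0 = g 0 ∧
      ∀ᶠ z in 𝓝 (0:ℂ), z * deriv h z + ((1 : ℂ) - k) * h z + b * z ^ (k-1) = g z := by
  obtain ⟨p, hp⟩ := hg
  obtain ⟨r, hpr⟩ := hp
  set a : ℕ → ℂ := fun n => p.coeff n with ha
  set c : ℕ → ℂ := fun n => if n = k - 1 then 0 else ((n : ℂ) + 1 - k)⁻¹ * a n with hc
  set q : FormalMultilinearSeries ℂ ℂ ℂ := ofScalars ℂ c with hq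
  have hqcoeff : ∀ n, q.coeff n = c n := by
    intro n
    simp only [hq, FormalMultilinearSeries.ofScalars, FormalMultilinearSeries.coeff,
      ContinuousMultilinearMap.smul_apply, ContinuousMultilinearMap.mkPiAlgebraFin_apply,
      smul_eq_mul]
    rw [List.prod_ofFn]
    simp
  have hcnorm : ∀ n, ‖c n‖ ≤ ‖a n‖ := by
    intro n
    by_cases hn : n = k - 1
    · simp [hc, hn]
    · simp only [hc, if_neg hn, norm_mul, norm_inv]
      have h1 : ((n : ℂ) + 1 - k) = (((n : ℤ) + 1 - k : ℤ) : ℂ) := by push_cast; ring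
      have h2 : (1:ℝ) ≤ ‖((n : ℂ) + 1 - k)‖ := by
        rw [h1, Complex.norm_intCast]
        have : ((n : ℤ) + 1 - k) ≠ 0 := by
          intro hx
          apply hn
          omega
        exact_mod_cast Int.one_le_abs this
      calc ‖((n : ℂ) + 1 - k)‖⁻¹ * ‖a n‖ ≤ 1 * ‖a n‖ := by
            apply mul_le_mul_of_nonneg_right _ (norm_nonneg _)
            rw [inv_le_one_iff₀]; right; exact h2
        _ = ‖a n‖ := one_mul _
  have hrad : p.radius ≤ q.radius := by
    apply ENNReal.le_of_forall_nnreal_lt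
    intro t ht
    obtain ⟨C, -, hC⟩ := p.norm_mul_pow_le_of_lt_radius ht
    apply q.le_radius_of_bound C
    intro n
    calc ‖q n‖ * (t:ℝ) ^ n = ‖c n‖ * (t:ℝ) ^ n := by rw [ofScalars_norm]
      _ ≤ ‖a n‖ * (t:ℝ) ^ n := by
          apply mul_le_mul_of_nonneg_right (hcnorm n) (by positivity)
      _ = ‖p n‖ * (t:ℝ) ^ n := by rw [norm_apply_eq_norm_coef]
      _ ≤ C := hC n
  have hqpos : 0 < q.radius := lt_of_lt_of_le hpr.r_pos (hpr.r_le.trans hrad)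
  set h : ℂ → ℂ := q.sum with hh
  have hqball : HasFPowerSeriesOnBall h q 0 q.radius := q.hasFPowerSeriesOnBall hqpos
  have hanal : AnalyticAt ℂ h 0 := hqball.hasFPowerSeriesAt.analyticAt
  have hk1 : (k : ℂ) ≠ 1 := by
    intro hx
    have : (k : ℂ) = ((1:ℕ) : ℂ) := by push_cast; exact hx
    have := Nat.cast_injective (R := ℂ) this
    omega
  refine ⟨h, a (k-1), hanal, ?_, ?_⟩
  · have h0 : h 0 = c 0 := by
      have := hqball.coeff_zero (fun _ => 0)
      rw [← this, apply_eq_pow_smul_coeff, pow_zero, one_smul, hqcoeff]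
    have g0 : g 0 = a 0 := by
      have := hpr.coeff_zero (fun _ => 0)
      rw [← this, apply_eq_pow_smul_coeff, pow_zero, one_smul]
    have h0k : (0 : ℕ) ≠ k - 1 := by omega
    rw [h0, g0, hc]
    simp only [if_neg h0k]
    rw [Nat.cast_zero, zero_add]
    have hk0 : ((1:ℂ) - k) ≠ 0 := by
      intro hx
      exact hk1 (by linear_combination -hx)
    field_simp
  · set ρ : ENNReal := min r q.radius with hρ
    have hρpos : 0 < ρ := lt_min hpr.r_pos hqpos
    have hmem : Metric.eball (0:ℂ) ρ ∈ 𝓝 (0:ℂ) := Metric.eball_mem_nhds _ hρpos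
    filter_upwards [hmem] with z hz
    have hzr : z ∈ Metric.eball (0:ℂ) r := Metric.eball_subset_eball (min_le_left _ _) hz
    have hzq : z ∈ Metric.eball (0:ℂ) q.radius := Metric.eball_subset_eball (min_le_right _ _) hz
    -- sum for g
    have hgs : HasSum (fun n => a n * z ^ n) (g z) := by
      have := hpr.hasSum (y := z) (by simpa using hzr)
      rw [zero_add] at this
      have e : (fun n => a n * z ^ n) = fun n => (p n) fun _ => z := by
        funext n
        rw [apply_eq_pow_smul_coeff, smul_eq_mul]; ring
      rw [e]; exact this
    -- sum for h
    have hhs : HasSum (fun n => c n * z ^ n) (h z) := by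
      have := hqball.hasSum (y := z) (by simpa using hzq)
      rw [zero_add] at this
      have e : (fun n => c n * z ^ n) = fun n => (q n) fun _ => z := by
        funext n
        rw [apply_eq_pow_smul_coeff, smul_eq_mul, hqcoeff]; ring
      rw [e]; exact this
    -- sum for z * deriv h z
    have hds : HasSum (fun n : ℕ => ((n:ℂ)+1) * c (n+1) * z ^ (n+1)) (z * deriv h z) := by
      have hfd := hqball.fderiv
      have := hfd.hasSum (y := z) (by simpa using hzq)
      rw [zero_add] at this
      have h2 := this.mapL (ContinuousLinearMap.apply ℂ ℂ z)
      have h3 : (ContinuousLinearMap.apply ℂ ℂ z) (fderiv ℂ h z) = z * deriv h z := by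
        simp only [ContinuousLinearMap.apply_apply]
        have hmap := (fderiv ℂ h z).map_smul z (1:ℂ)
        simp only [smul_eq_mul, mul_one] at hmap
        rw [hmap, fderiv_apply_one_eq_deriv]
      rw [h3] at h2
      have heq : (fun n : ℕ => (ContinuousLinearMap.apply ℂ ℂ z) ((q.derivSeries n) fun _ => z))
          = fun n : ℕ => ((n:ℂ)+1) * c (n+1) * z ^ (n+1) := by
        funext n
        rw [ContinuousLinearMap.apply_apply, derivSeries_apply_diag,
          apply_eq_pow_smul_coeff, hqcoeff]
        push_cast
        simp only [smul_eq_mul, nsmul_eq_mul]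
        push_cast
        ring
      rwa [heq] at h2
    have hds' : HasSum (fun n : ℕ => (n:ℂ) * c n * z ^ n) (z * deriv h z) := by
      have hds2 : HasSum (fun n : ℕ => (((n+1 : ℕ)):ℂ) * c (n+1) * z ^ (n+1)) (z * deriv h z) := by
        convert hds using 2 with n
        push_cast; ring
      have := (hasSum_nat_add_iff (f := fun n : ℕ => (n:ℂ) * c n * z ^ n) 1).mp hds2
      simpa using this
    have hsum2 : HasSum (fun n : ℕ => ((n:ℂ) + 1 - k) * c n * z ^ n)
        (z * deriv h z + ((1:ℂ) - k) * h z) := by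
      have := hds'.add (hhs.mul_left ((1:ℂ) - k))
      convert this using 2 with n
      ring
    -- identify termwise with a n * z^n minus the (k-1) term
    have hterm : ∀ n : ℕ, ((n:ℂ) + 1 - k) * c n * z ^ n
        = a n * z ^ n - (if n = k - 1 then a (k-1) * z ^ (k-1) else 0) := by
      intro n
      by_cases hn : n = k - 1
      · subst hn
        simp [hc]
      · simp only [hc, if_neg hn]
        have hne : ((n : ℂ) + 1 - k) ≠ 0 := by
          have h1 : ((n : ℂ) + 1 - k) = (((n : ℤ) + 1 - k : ℤ) : ℂ) := by push_cast; ring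
          rw [h1]
          exact_mod_cast (by omega : ((n:ℤ) + 1 - k) ≠ 0)
        field_simp
        ring
    have hsum3 : HasSum (fun n : ℕ => a n * z ^ n - (if n = k - 1 then a (k-1) * z ^ (k-1) else 0))
        (g z - a (k-1) * z ^ (k-1)) := by
      apply hgs.sub
      exact hasSum_ite_eq (k-1) (a (k-1) * z ^ (k-1))
    have := hsum2.unique (by rw [funext hterm]; exact hsum3)
    linear_combination this

/-- Analytic implicit function theorem, one parameter, solving `F (z, v z) = 0`. -/
lemma analytic_implicit_function (F : ℂ × ℂ → ℂ) (v0 : ℂ)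
    (hF : AnalyticAt ℂ F (0, v0)) (hF0 : F (0, v0) = 0)
    (hd : deriv (fun y => F (0, y)) v0 ≠ 0) :
    ∃ v : ℂ → ℂ, AnalyticAt ℂ v 0 ∧ v 0 = v0 ∧ ∀ᶠ z in 𝓝 (0:ℂ), F (z, v z) = 0 := by
  classical
  set Φ : ℂ × ℂ → ℂ × ℂ := fun p => (p.1, F p) with hΦ
  have hΦa : AnalyticAt ℂ Φ (0, v0) := analyticAt_fst.prod hF
  set L : ℂ × ℂ →L[ℂ] ℂ := fderiv ℂ F (0, v0) with hL
  have hFd : HasFDerivAt F L (0, v0) := hF.differentiableAt.hasFDerivAt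
  set B : ℂ := L (0, 1) with hB
  have hBd : HasDerivAt (fun y => F (0, y)) B v0 := by
    have hinc : HasDerivAt (fun y : ℂ => ((0 : ℂ), y)) ((0 : ℂ), (1:ℂ)) v0 :=
      (hasDerivAt_const v0 (0:ℂ)).prodMk (hasDerivAt_id v0)
    exact hFd.comp_hasDerivAt v0 hinc
  have hBne : B ≠ 0 := by rwa [hBd.deriv] at hd
  -- the continuous linear equiv
  set f₁ : ℂ × ℂ →L[ℂ] ℂ × ℂ := (ContinuousLinearMap.fst ℂ ℂ ℂ).prod L with hf₁
  set M : ℂ × ℂ →L[ℂ] ℂ :=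
    ContinuousLinearMap.snd ℂ ℂ ℂ - L.comp ((ContinuousLinearMap.fst ℂ ℂ ℂ).prod 0) with hM
  set f₂ : ℂ × ℂ →L[ℂ] ℂ × ℂ := (ContinuousLinearMap.fst ℂ ℂ ℂ).prod (B⁻¹ • M) with hf₂
  have hLdec : ∀ x y : ℂ, L (x, y) = L (x, 0) + y * B := by
    intro x y
    have : (x, y) = (x, (0:ℂ)) + y • ((0:ℂ), (1:ℂ)) := by simp
    rw [this, map_add, map_smul, smul_eq_mul, hB]
  have h₁ : Function.LeftInverse f₂ f₁ := by
    intro p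
    obtain ⟨x, y⟩ := p
    simp only [hf₁, hf₂, hM, ContinuousLinearMap.prod_apply, ContinuousLinearMap.coe_fst',
      ContinuousLinearMap.smul_apply, ContinuousLinearMap.sub_apply,
      ContinuousLinearMap.coe_snd', ContinuousLinearMap.comp_apply,
      ContinuousLinearMap.zero_apply, smul_eq_mul]
    refine Prod.ext rfl ?_
    simp only [hLdec x y]
    field_simp
    ring
  have h₂ : Function.RightInverse f₂ f₁ := by
    intro p
    obtain ⟨x, y⟩ := p
    simp only [hf₁, hf₂, hM, ContinuousLinearMap.prod_apply, ContinuousLinearMap.coe_fst',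
      ContinuousLinearMap.smul_apply, ContinuousLinearMap.sub_apply,
      ContinuousLinearMap.coe_snd', ContinuousLinearMap.comp_apply,
      ContinuousLinearMap.zero_apply, smul_eq_mul]
    refine Prod.ext rfl ?_
    rw [hLdec x (B⁻¹ * (y - L (x, 0)))]
    field_simp
    ring
  set e : (ℂ × ℂ) ≃L[ℂ] (ℂ × ℂ) := ContinuousLinearEquiv.equivOfInverse f₁ f₂ h₁ h₂ with he
  have hΦd : HasFDerivAt Φ (e : (ℂ × ℂ) →L[ℂ] (ℂ × ℂ)) (0, v0) := by
    have : (e : (ℂ × ℂ) →L[ℂ] (ℂ × ℂ)) = f₁ := rfl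
    rw [this, hf₁]
    exact (hasFDerivAt_fst).prodMk hFd
  have hfd_eq : fderiv ℂ Φ (0, v0) = (e : (ℂ × ℂ) →L[ℂ] (ℂ × ℂ)) := hΦd.fderiv
  have hΦs : HasStrictFDerivAt Φ (e : (ℂ × ℂ) →L[ℂ] (ℂ × ℂ)) (0, v0) := by
    have := hΦa.hasStrictFDerivAt
    rwa [hfd_eq] at this
  set Ψ : OpenPartialHomeomorph (ℂ × ℂ) (ℂ × ℂ) := hΦs.toOpenPartialHomeomorph Φ with hΨ
  have hΨcoe : (Ψ : ℂ × ℂ → ℂ × ℂ) = Φ := hΦs.toOpenPartialHomeomorph_coe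
  have hsrc : (0, v0) ∈ Ψ.source := hΦs.mem_toOpenPartialHomeomorph_source
  have hΦ0 : Φ (0, v0) = (0, 0) := by simp [hΦ, hF0]
  have htgt : ((0:ℂ), (0:ℂ)) ∈ Ψ.target := by
    have := Ψ.map_source hsrc
    rwa [hΨcoe, hΦ0] at this
  have hsymm : AnalyticAt ℂ Ψ.symm ((0:ℂ), (0:ℂ)) := by
    have h1 : Ψ.symm ((0:ℂ), (0:ℂ)) = (0, v0) := by
      have := Ψ.left_inv hsrc
      rw [hΨcoe, hΦ0] at this
      exact this
    apply Ψ.analyticAt_symm htgt (i := e)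
    · rw [h1, hΨcoe]; exact hΦa
    · rw [h1, hΨcoe]; exact hfd_eq
  set v : ℂ → ℂ := fun z => (Ψ.symm (z, 0)).2 with hv
  have hva : AnalyticAt ℂ v 0 := by
    have h1 : AnalyticAt ℂ (fun z : ℂ => ((z : ℂ), (0:ℂ))) 0 :=
      analyticAt_id.prod analyticAt_const
    have h2 : AnalyticAt ℂ (fun z : ℂ => Ψ.symm (z, 0)) 0 := by
      have := AnalyticAt.comp (g := (Ψ.symm : ℂ × ℂ → ℂ × ℂ))
        (f := fun z : ℂ => ((z : ℂ), (0:ℂ))) (x := (0:ℂ)) hsymm h1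
      simpa [Function.comp_def] using this
    have := AnalyticAt.comp (g := (Prod.snd : ℂ × ℂ → ℂ))
      (f := fun z : ℂ => Ψ.symm (z, 0)) (x := (0:ℂ)) analyticAt_snd h2
    simpa [Function.comp_def] using this
  have hv0 : v 0 = v0 := by
    have := Ψ.left_inv hsrc
    rw [hΨcoe, hΦ0] at this
    show (Ψ.symm ((0:ℂ), (0:ℂ))).2 = v0
    rw [this]
  refine ⟨v, hva, hv0, ?_⟩
  have hev : ∀ᶠ z in 𝓝 (0:ℂ), ((z : ℂ), (0:ℂ)) ∈ Ψ.target := by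
    have hc : ContinuousAt (fun z : ℂ => ((z:ℂ), (0:ℂ))) 0 := by fun_prop
    exact hc (Ψ.open_target.mem_nhds htgt)
  filter_upwards [hev] with z hz
  have hri := Ψ.right_inv hz
  rw [hΨcoe] at hri
  -- Φ (Ψ.symm (z,0)) = (z, 0), so first coordinate of Ψ.symm (z,0) is z and F of it is 0
  have h1 : (Ψ.symm (z, 0)).1 = z := congrArg Prod.fst hri
  have h2 : F (Ψ.symm (z, 0)) = 0 := congrArg Prod.snd hri
  have : Ψ.symm (z, 0) = (z, v z) := by
    rw [hv]
    exact Prod.ext h1 rfl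
  rwa [this] at h2

/-- Local normal form of a quadratic differential `f(z)·z^{−2k}·dz²` at a pole of even
order `2k ≥ 4`: there are a local coordinate change `w`, fixing `0` with `w'(0) ≠ 0`,
and a constant `b ∈ ℂ`, such that
`f(z)/z^{2k} = (1 + b·w(z)^{k−1})²·w'(z)²/w(z)^{2k}` near `0`. -/
theorem quadratic_differential_normal_form_even_pole
    (k : ℕ) (hk : 2 ≤ k)
    (U : Set ℂ) (hU : IsOpen U) (h0U : (0 : ℂ) ∈ U)
    (f : ℂ → ℂ) (hf : DifferentiableOn ℂ f U) (hf0 : f 0 ≠ 0) :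
    ∃ V : Set ℂ, IsOpen V ∧ (0 : ℂ) ∈ V ∧ V ⊆ U ∧
      ∃ w : ℂ → ℂ, ∃ b : ℂ, Set.InjOn w V ∧ DifferentiableOn ℂ w V ∧
        w 0 = 0 ∧ deriv w 0 ≠ 0 ∧
        ∀ z ∈ V, z ≠ 0 →
          f z / z ^ (2 * k)
            = (1 + b * w z ^ (k - 1)) ^ 2 * (deriv w z) ^ 2 / w z ^ (2 * k) := by
  obtain ⟨m, rfl⟩ : ∃ m, k = m + 2 := ⟨k - 2, by omega⟩
  have ekm : m + 2 - 1 = m + 1 := rfl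
  have hfa : AnalyticAt ℂ f 0 := hf.analyticAt (hU.mem_nhds h0U)
  obtain ⟨g, hga, hg0sq, hgev⟩ := exists_analytic_sqrt f hfa hf0
  have hg0 : g 0 ≠ 0 := by
    intro hx; rw [hx] at hg0sq; simp at hg0sq; exact hf0 hg0sq.symm
  obtain ⟨h, b, hha, hh0, hhev⟩ := exists_euler_solution (m+2) (by omega) g hga
  set ck : ℂ := (1 : ℂ) - ((m+2 : ℕ) : ℂ) with hck
  have hckc : ck = -((m:ℂ) + 1) := by rw [hck]; push_cast; ring
  have hckne : ck ≠ 0 := by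
    rw [hckc]
    intro hx
    have h1 : ((m:ℕ) : ℂ) = -1 := by linear_combination -hx
    have h2 : ((m:ℕ) : ℝ) = -1 := by exact_mod_cast congrArg Complex.re h1
    have := Nat.cast_nonneg (α := ℝ) m
    linarith
  set v0 : ℂ := Complex.log (g 0) / ck with hv0def
  have hexpv0 : Complex.exp (ck * v0) = g 0 := by
    rw [hv0def, mul_div_cancel₀ _ hckne, Complex.exp_log hg0]
  set F : ℂ × ℂ → ℂ :=
    fun p => Complex.exp (ck * p.2) / ck + b * p.1 ^ ((m+2)-1) * p.2 - h p.1 with hF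
  have hFa : AnalyticAt ℂ F (0, v0) := by
    have h1 : AnalyticAt ℂ (fun p : ℂ × ℂ => Complex.exp (ck * p.2) / ck) (0, v0) :=
      (analyticAt_cexp.comp (analyticAt_const.mul analyticAt_snd)).div
        analyticAt_const hckne
    have h2 : AnalyticAt ℂ (fun p : ℂ × ℂ => b * p.1 ^ ((m+2)-1) * p.2) (0, v0) :=
      (analyticAt_const.mul (analyticAt_fst.pow _)).mul analyticAt_snd
    have h3 : AnalyticAt ℂ (fun p : ℂ × ℂ => h p.1) (0, v0) := by
      have := AnalyticAt.comp (g := h) (f := fun p : ℂ × ℂ => p.1)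
        (x := ((0:ℂ), v0)) hha analyticAt_fst
      simpa [Function.comp_def] using this
    exact (h1.add h2).sub h3
  have hz0pow : (0:ℂ) ^ ((m+2) - 1) = 0 := by
    apply zero_pow; omega
  have hF0 : F (0, v0) = 0 := by
    rw [hF]
    simp only [hz0pow]
    rw [hexpv0]
    have : g 0 / ck = h 0 := by
      rw [← hh0, mul_comm, mul_div_assoc, div_self hckne, mul_one]
    rw [this]; ring
  have hFd : deriv (fun y => F (0, y)) v0 ≠ 0 := by
    have hder : HasDerivAt (fun y => F (0, y)) (Complex.exp (ck * v0) * ck / ck) v0 := by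
      have d1 : HasDerivAt (fun y : ℂ => Complex.exp (ck * y) / ck)
          (Complex.exp (ck * v0) * ck / ck) v0 := by
        have := (((hasDerivAt_id v0).const_mul ck).cexp).div_const ck
        simpa using this
      have d2 : HasDerivAt (fun y : ℂ => b * (0:ℂ) ^ ((m+2)-1) * y - h 0)
          (b * (0:ℂ) ^ ((m+2)-1)) v0 :=
        ((hasDerivAt_id v0).const_mul (b * (0:ℂ) ^ ((m+2)-1))).sub_const (h 0) |>.congr_deriv
          (by ring)
      have hsum := d1.add d2
      rw [hz0pow, mul_zero, add_zero] at hsum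
      have hfun : (fun y => F (0, y))
          = ((fun y => Complex.exp (ck * y) / ck) + fun y => 0 * y - h 0) := by
        funext y
        rw [hF]
        simp only [hz0pow, mul_zero, zero_mul, Pi.add_apply]
        ring
      rw [hfun]; exact hsum
    rw [hder.deriv, mul_div_assoc, div_self hckne, mul_one, hexpv0]
    exact hg0
  obtain ⟨v, hva, hv0, hFev⟩ := analytic_implicit_function F v0 hFa hF0 hFd
  set w : ℂ → ℂ := fun z => z * Complex.exp (v z) with hw
  -- strict derivative of w at 0 for local injectivity
  have hvs : HasStrictDerivAt v (deriv v 0) 0 := by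
    have := hva.hasStrictFDerivAt
    rwa [hasStrictFDerivAt_iff_hasStrictDerivAt, fderiv_apply_one_eq_deriv] at this
  have hws : HasStrictDerivAt w (Complex.exp (v 0)) 0 := by
    have := (hasStrictDerivAt_id (0:ℂ)).mul hvs.cexp
    simp at this; exact this
  have hwderiv0 : Complex.exp (v 0) ≠ 0 := Complex.exp_ne_zero _
  set Ψ := (hws.hasStrictFDerivAt_equiv hwderiv0).toOpenPartialHomeomorph w with hΨ
  have hΨsrc : (0:ℂ) ∈ Ψ.source :=
    (hws.hasStrictFDerivAt_equiv hwderiv0).mem_toOpenPartialHomeomorph_source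
  have hΨcoe : (Ψ : ℂ → ℂ) = w :=
    (hws.hasStrictFDerivAt_equiv hwderiv0).toOpenPartialHomeomorph_coe
  -- gather eventual facts into an open set O
  have hev : ∀ᶠ z in 𝓝 (0:ℂ), z ∈ U ∧ F (z, v z) = 0 ∧
      (z * deriv h z + ck * h z + b * z ^ ((m+2)-1) = g z) ∧
      g z ^ 2 = f z ∧ AnalyticAt ℂ v z := by
    filter_upwards [hU.mem_nhds h0U, hFev, hhev, hgev, hva.eventually_analyticAt]
      with z h1 h2 h3 h4 h5
    exact ⟨h1, h2, h3, h4, h5⟩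
  obtain ⟨O, hOsub, hOopen, hO0⟩ := mem_nhds_iff.mp hev
  set V : Set ℂ := O ∩ Ψ.source with hV
  have hVopen : IsOpen V := hOopen.inter Ψ.open_source
  have hV0 : (0:ℂ) ∈ V := ⟨hO0, hΨsrc⟩
  have hVU : V ⊆ U := fun z hz => (hOsub hz.1).1
  -- derivative of w on V
  have hwd : ∀ z ∈ O, HasDerivAt w
      (Complex.exp (v z) + z * (Complex.exp (v z) * deriv v z)) z := by
    intro z hz
    have hvz : HasDerivAt v (deriv v z) z := (hOsub hz).2.2.2.2.differentiableAt.hasDerivAt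
    have := (hasDerivAt_id z).mul hvz.cexp
    simp at this; exact this
  refine ⟨V, hVopen, hV0, hVU, w, b, ?_, ?_, ?_, ?_, ?_⟩
  · have := Ψ.injOn.mono (Set.inter_subset_right : V ⊆ Ψ.source)
    rwa [hΨcoe] at this
  · intro z hz
    exact ((hwd z hz.1).differentiableAt).differentiableWithinAt
  · simp [hw]
  · have := (hwd 0 hO0).deriv
    rw [this]
    simpa using hwderiv0
  · intro z hz hz0
    obtain ⟨hzO, -⟩ := hz
    obtain ⟨hzU, hE, hstar, hgf, hvz⟩ := hOsub hzO
    set Y : ℂ := Complex.exp (v z) with hY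
    set X : ℂ := Complex.exp (ck * v z) with hX
    set dv : ℂ := deriv v z with hdv
    have hYne : Y ≠ 0 := Complex.exp_ne_zero _
    have hwz : w z = z * Y := rfl
    have hwzne : w z ≠ 0 := by rw [hwz]; exact mul_ne_zero hz0 hYne
    have hXY : X * Y ^ (m+2) = Y := by
      rw [hX, hY, ← Complex.exp_nat_mul, ← Complex.exp_add]
      congr 1
      rw [hck]
      push_cast
      ring
    have hdw : deriv w z = Y + z * (Y * dv) := (hwd z hzO).deriv
    -- (E) at z
    have hEz : X / ck + b * z ^ (m+1) * v z = h z := by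
      have := hE
      rw [hF] at this
      simp only [ekm] at this
      linear_combination this
    -- (D): derivative of the implicit equation
    have hDz : X * (ck * dv) / ck + (b * (((m+1:ℕ)):ℂ) * z ^ m * v z + b * z ^ (m+1) * dv)
        = deriv h z := by
      have hloc : ∀ᶠ x in 𝓝 z, (fun x => Complex.exp (ck * v x) / ck
          + b * x ^ (m+1) * v x) x = h x := by
        filter_upwards [hOopen.mem_nhds hzO] with x hx
        have := (hOsub hx).2.1
        rw [hF] at this
        simp only [ekm] at this
        linear_combination this
      have hderiv_eq := Filter.EventuallyEq.deriv_eq hloc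
      rw [← hderiv_eq]
      -- compute deriv of the left side
      have hvx : ∀ᶠ x in 𝓝 z, AnalyticAt ℂ v x := by
        filter_upwards [hOopen.mem_nhds hzO] with x hx using (hOsub hx).2.2.2.2
      have hvd : HasDerivAt v dv z := hvz.differentiableAt.hasDerivAt
      have t1 : HasDerivAt (fun x => Complex.exp (ck * v x) / ck)
          (X * (ck * dv) / ck) z := ((hvd.const_mul ck).cexp).div_const ck
      have t2 : HasDerivAt (fun x => b * x ^ (m+1) * v x)
          (b * (((m+1:ℕ)):ℂ) * z ^ m * v z + b * z ^ (m+1) * dv) z := by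
        have hp : HasDerivAt (fun x : ℂ => b * x ^ (m+1))
            (b * ((((m+1:ℕ)):ℂ) * z ^ m)) z := by
          have := (hasDerivAt_pow (m+1) z).const_mul b
          simpa using this
        have := hp.mul hvd
        exact this.congr_deriv (by ring)
      exact ((t1.add t2).deriv).symm
    -- eliminate: get (dagger)
    have hdagger : g z = X * (1 + z * dv) + b * z ^ (m+2) * dv + b * z ^ (m+1) := by
      have h1 : z * deriv h z + ck * h z + b * z ^ (m+1) = g z := by
        simpa only [ekm] using hstar
      rw [← hDz, ← hEz] at h1
      have hX1 : X * (ck * dv) / ck = X * dv := by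
        rw [mul_comm ck dv, ← mul_assoc, mul_div_assoc, div_self hckne, mul_one]
      have hX2 : ck * (X / ck + b * z ^ (m+1) * v z)
          = X + ck * (b * z ^ (m+1) * v z) := by
        rw [mul_add, mul_div_cancel₀ _ hckne]
      rw [hX1, hX2] at h1
      have hmc : (((m+1:ℕ)):ℂ) = (m:ℂ) + 1 := by push_cast; ring
      rw [hmc, hckc] at h1
      linear_combination -h1
    -- key pre-square identity
    have key : (1 + b * w z ^ (m+1)) * deriv w z * z ^ (m+2) = g z * w z ^ (m+2) := by
      rw [hdw, hwz, hdagger]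
      have : X * Y ^ (m+2) = Y := hXY
      linear_combination (-(z ^ (m+2)) * (1 + z * dv)) * this
    -- final computation
    have h2k : 2 * (m+2) = (m+2) + (m+2) := by ring
    rw [← hgf]
    have e1 : m + 2 - 1 = m + 1 := rfl
    rw [e1]
    rw [div_eq_div_iff (pow_ne_zero _ hz0) (pow_ne_zero _ hwzne)]
    calc g z ^ 2 * w z ^ (2 * (m+2))
        = (g z * w z ^ (m+2)) ^ 2 := by rw [h2k]; ring
      _ = ((1 + b * w z ^ (m+1)) * deriv w z * z ^ (m+2)) ^ 2 := by rw [key]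
      _ = (1 + b * w z ^ (m+1)) ^ 2 * deriv w z ^ 2 * z ^ (2 * (m+2)) := by
          rw [h2k]; ring
end

section
/- Let m : ℕ → ℕ be the sequence defined by m_0 = m_1 = 1 and, for k ≥ 2, m_k = Σ_{i+j=k−2} m_i·m_j + m_{k−1}. Then there exist r > 0 and a holomorphic function g on the open disc {z ∈ ℂ : |z| < r} such that g(0) = 1, g(z) = 1 + z²·g(z)² + z·g(z) for all |z| < r, and for every k the k-th Taylor coefficient of g at 0 equals m_k (that is, g^{(k)}(0)/k! = m_k). In particular, the power series Σ_k m_k z^k has positive radius of convergence. -/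
open Finset
open scoped NNReal ENNReal

lemma catalan_le_four_pow' (n : ℕ) : catalan n ≤ 4 ^ n := by
  calc catalan n ≤ (n+1) * catalan n := Nat.le_mul_of_pos_left _ n.succ_pos
  _ = n.centralBinom := succ_mul_catalan_eq_centralBinom n
  _ ≤ (2*n+1).choose n := Nat.choose_le_choose n (by omega)
  _ ≤ 4 ^ n := Nat.choose_middle_le_pow n

lemma catalan_conv' (n : ℕ) :
    (∑ p ∈ Finset.HasAntidiagonal.antidiagonal n, catalan (p.1+1) * catalan (p.2+1)) + 2 * catalan (n+2)
      = catalan (n+3) := by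
  have h1 : catalan (n+3)
      = (∑ i ∈ range (n+1), catalan (i+1) * catalan (n+2-(i+1))) + catalan (n+2) + catalan (n+2) := by
    rw [show n+3=(n+2)+1 by ring, catalan_succ',
      Nat.sum_antidiagonal_eq_sum_range_succ (fun x y => catalan x * catalan y)]
    rw [Finset.sum_range_succ', Finset.sum_range_succ]
    simp
  rw [h1, Nat.sum_antidiagonal_eq_sum_range_succ (fun x y => catalan (x+1) * catalan (y+1))]
  have h2 : ∀ i ∈ Finset.range (n+1),
      catalan (i+1) * catalan (n-i+1) = catalan (i+1) * catalan (n+2-(i+1)) := by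
    intro i hi; simp only [Finset.mem_range] at hi; congr 2; omega
  rw [Finset.sum_congr rfl h2]
  ring

lemma motzkin_le_catalan (m : ℕ → ℕ) (hm0 : m 0 = 1) (hm1 : m 1 = 1)
    (hm : ∀ k, 2 ≤ k →
      m k = (∑ p ∈ Finset.HasAntidiagonal.antidiagonal (k - 2), m p.1 * m p.2) + m (k - 1)) :
    ∀ k, m k ≤ catalan (k+1) := by
  intro k
  induction k using Nat.strong_induction_on with
  | _ k ih =>
    match k with
    | 0 => simp [hm0]
    | 1 => rw [hm1]; simp [catalan]
    | (n+2) =>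
      rw [hm (n+2) (by omega)]
      have e1 : n + 2 - 2 = n := by omega
      have e2 : n + 2 - 1 = n + 1 := by omega
      rw [e1, e2]
      have h1 : (∑ p ∈ Finset.HasAntidiagonal.antidiagonal n, m p.1 * m p.2)
          ≤ ∑ p ∈ Finset.HasAntidiagonal.antidiagonal n, catalan (p.1+1) * catalan (p.2+1) := by
        apply Finset.sum_le_sum
        intro p hp
        rw [Finset.HasAntidiagonal.mem_antidiagonal] at hp
        exact Nat.mul_le_mul (ih p.1 (by omega)) (ih p.2 (by omega))
      have h2 : m (n+1) ≤ catalan (n+2) := ih (n+1) (by omega)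
      have e3 : n + 2 + 1 = n + 3 := by omega
      rw [e3]
      have := catalan_conv' n
      omega

lemma motzkin_le_four_pow (m : ℕ → ℕ) (hm0 : m 0 = 1) (hm1 : m 1 = 1)
    (hm : ∀ k, 2 ≤ k →
      m k = (∑ p ∈ Finset.HasAntidiagonal.antidiagonal (k - 2), m p.1 * m p.2) + m (k - 1)) :
    ∀ k, (m k : ℝ) ≤ 4 ^ (k+1) := by
  intro k
  have := (motzkin_le_catalan m hm0 hm1 hm k).trans (catalan_le_four_pow' (k+1))
  exact_mod_cast this

/-- There is a holomorphic function `g` on a disc about `0` with `g(0) = 1` satisfying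
`g(z) = 1 + z²g(z)² + zg(z)`, whose Taylor coefficients at `0` are the Motzkin numbers;
in particular the Motzkin generating series has positive radius of convergence. -/
theorem motzkin_generating_function_holomorphic
    (m : ℕ → ℕ) (hm0 : m 0 = 1) (hm1 : m 1 = 1)
    (hm : ∀ k, 2 ≤ k →
      m k = (∑ p ∈ Finset.HasAntidiagonal.antidiagonal (k - 2), m p.1 * m p.2) + m (k - 1)) :
    (∃ r : ℝ, 0 < r ∧ ∃ g : ℂ → ℂ,
      DifferentiableOn ℂ g (Metric.ball 0 r) ∧ g 0 = 1 ∧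
      (∀ z ∈ Metric.ball (0 : ℂ) r, g z = 1 + z ^ 2 * g z ^ 2 + z * g z) ∧
      (∀ k : ℕ, iteratedDeriv k g 0 / (Nat.factorial k : ℂ) = (m k : ℂ))) ∧
      ∃ r' : ℝ, 0 < r' ∧ Summable (fun k => (m k : ℝ) * r' ^ k) := by
  have hb : ∀ k, (m k : ℝ) ≤ 4 ^ (k+1) := motzkin_le_four_pow m hm0 hm1 hm
  -- the formal power series
  set p : FormalMultilinearSeries ℂ ℂ ℂ :=
    FormalMultilinearSeries.ofScalars ℂ (fun k => (m k : ℂ)) with hp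
  have hpnorm : ∀ n, ‖p n‖ = (m n : ℝ) := by
    intro n
    rw [hp, FormalMultilinearSeries.ofScalars_norm]
    simp
  have hradius : ((1/8 : ℝ≥0) : ℝ≥0∞) ≤ p.radius := by
    apply p.le_radius_of_bound 4
    intro n
    rw [hpnorm]
    calc (m n : ℝ) * ((1/8 : ℝ≥0) : ℝ) ^ n ≤ 4 ^ (n+1) * (1/8 : ℝ) ^ n := by
          apply mul_le_mul (hb n) (by norm_num) (by positivity) (by positivity)
    _ = 4 * (1/2 : ℝ) ^ n := by
          rw [pow_succ]
          rw [show (1/2 : ℝ) = 4 * (1/8) by norm_num, mul_pow]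
          ring
    _ ≤ 4 * 1 := by
          gcongr
          exact pow_le_one₀ (by norm_num) (by norm_num)
    _ = 4 := by norm_num
  have hrpos : (0 : ℝ≥0∞) < p.radius :=
    lt_of_lt_of_le (by norm_num) hradius
  -- the function
  set g : ℂ → ℂ := fun z => ∑' k, (m k : ℂ) * z ^ k with hgdef
  have hgsum : p.sum = g := by
    funext z
    simp only [FormalMultilinearSeries.sum, hp, hgdef,
      FormalMultilinearSeries.ofScalars_apply_eq, smul_eq_mul]
  have hg8 : HasFPowerSeriesOnBall g p 0 ((1/8 : ℝ≥0) : ℝ≥0∞) := by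
    rw [← hgsum]
    exact (p.hasFPowerSeriesOnBall hrpos).mono (by norm_num) hradius
  -- summability on the ball
  have hsum_norm : ∀ z : ℂ, ‖z‖ < 1/8 → Summable (fun k => ‖(m k : ℂ) * z ^ k‖) := by
    intro z hz
    apply Summable.of_nonneg_of_le (fun k => norm_nonneg _) (fun k => ?_)
      (((summable_geometric_of_lt_one (by norm_num) (by norm_num : (1/2:ℝ) < 1))).mul_left 4)
    rw [norm_mul, norm_pow]
    calc ‖(m k : ℂ)‖ * ‖z‖ ^ k ≤ 4^(k+1) * (1/8 : ℝ)^k := by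
          apply mul_le_mul _ (by
            apply pow_le_pow_left₀ (norm_nonneg z) hz.le) (by positivity) (by positivity)
          simpa using hb k
    _ = 4 * (1/2 : ℝ)^k := by
          rw [pow_succ, show (1/2 : ℝ) = 4 * (1/8) by norm_num, mul_pow]; ring
  -- g 0 = 1
  have hg0 : g 0 = 1 := by
    have e : g 0 = ∑' (k : ℕ), (m k : ℂ) * (0:ℂ) ^ k := rfl
    rw [e, tsum_eq_single 0 (fun b hb => by simp [zero_pow hb])]
    simp [hm0]
  refine ⟨⟨1/8, by norm_num, g, ?_, hg0, ?_, ?_⟩, 1/16, by norm_num, ?_⟩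
  · -- differentiability
    have := hg8.differentiableOn
    rwa [Metric.emetric_ball_nnreal, show ((1/8 : ℝ≥0) : ℝ) = 1/8 by norm_num] at this
  · -- functional equation
    intro z hz
    rw [Metric.mem_ball, dist_zero_right] at hz
    set a : ℕ → ℂ := fun k => (m k : ℂ) * z ^ k with ha
    have hnorm : Summable (fun k => ‖a k‖) := hsum_norm z hz
    have hA : Summable a := hnorm.of_norm
    set c : ℕ → ℕ := fun n => ∑ q ∈ Finset.HasAntidiagonal.antidiagonal n, m q.1 * m q.2 with hc
    have hinner : ∀ n, (∑ q ∈ Finset.HasAntidiagonal.antidiagonal n, a q.1 * a q.2) = (c n : ℂ) * z ^ n := by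
      intro n
      rw [hc]
      push_cast
      rw [Finset.sum_mul]
      apply Finset.sum_congr rfl
      intro q hq
      rw [Finset.HasAntidiagonal.mem_antidiagonal] at hq
      rw [ha, ← hq]
      ring
    have hCauchy : g z * g z = ∑' n, (c n : ℂ) * z ^ n := by
      have e : g z * g z = (∑' k, a k) * (∑' k, a k) := rfl
      rw [e, tsum_mul_tsum_eq_tsum_sum_antidiagonal_of_summable_norm hnorm hnorm]
      exact tsum_congr hinner
    have hScn : Summable (fun n => (c n : ℂ) * z ^ n) := by
      have h1 := (summable_norm_sum_mul_antidiagonal_of_summable_norm hnorm hnorm).of_norm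
      exact h1.congr hinner
    -- shifted summabilities
    have hA1 : Summable (fun k => a (k+1)) := (summable_nat_add_iff 1).mpr hA
    have hA2 : Summable (fun k => a (k+2)) := (summable_nat_add_iff 2).mpr hA
    have hS1 : Summable (fun k => (c k : ℂ) * z ^ (k+2)) := by
      apply (hScn.mul_left (z^2)).congr
      intro k; ring
    have hS2 : Summable (fun k => (m (k+1) : ℂ) * z ^ (k+2)) := by
      apply (hA1.mul_left z).congr
      intro k; rw [ha]; ring
    -- split g z
    have hsplit : g z = 1 + z + ((∑' k, (c k : ℂ) * z ^ (k+2)) + ∑' k, (m (k+1) : ℂ) * z ^ (k+2)) := by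
      have e : g z = ∑' k, a k := rfl
      rw [e, Summable.tsum_eq_zero_add hA, Summable.tsum_eq_zero_add hA1]
      have ha0 : a 0 = 1 := by simp [ha, hm0]
      have ha1 : a (0+1) = z := by simp [ha, hm1]
      rw [ha0, ha1, ← Summable.tsum_add hS1 hS2]
      have : ∀ k, a (k+1+1) = (c k : ℂ) * z ^ (k+2) + (m (k+1) : ℂ) * z ^ (k+2) := by
        intro k
        have := hm (k+2) (by omega)
        have e1 : k + 2 - 2 = k := by omega
        have e2 : k + 2 - 1 = k + 1 := by omega
        rw [e1, e2] at this
        show ((m (k+2) : ℂ)) * z ^ (k+2) = _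
        rw [this]
        push_cast [hc]
        ring
      rw [tsum_congr this]
      ring
    -- compute RHS pieces
    have hz2 : z^2 * g z ^ 2 = ∑' k, (c k : ℂ) * z ^ (k+2) := by
      rw [sq (g z), hCauchy, ← tsum_mul_left]
      apply tsum_congr
      intro k; ring
    have hzg : z * g z = z + ∑' k, (m (k+1) : ℂ) * z ^ (k+2) := by
      have e : z * g z = z * ∑' k, (m k : ℂ) * z ^ k := rfl
      rw [e, ← tsum_mul_left]
      have hza : Summable (fun k => z * ((m k : ℂ) * z ^ k)) := (hA.mul_left z).congr (fun k => by rw [ha])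
      rw [Summable.tsum_eq_zero_add hza]
      have h0 : z * ((m 0 : ℂ) * z ^ 0) = z := by simp [hm0]
      rw [h0]
      congr 1
      apply tsum_congr
      intro k
      ring
    rw [hz2, hzg, hsplit]
    ring
  · -- Taylor coefficients
    intro k
    have h1 := hg8.factorial_smul (y := (1:ℂ)) k
    have h2 : p k (fun _ => (1:ℂ)) = (m k : ℂ) := by
      rw [hp, FormalMultilinearSeries.ofScalars_apply_eq]
      simp
    rw [h2] at h1
    rw [iteratedDeriv, ← h1]
    have : (Nat.factorial k : ℂ) ≠ 0 := by
      exact_mod_cast Nat.factorial_ne_zero k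
    field_simp [nsmul_eq_mul]
    exact nsmul_eq_mul _ _
  · -- summability
    apply Summable.of_nonneg_of_le (fun k => by positivity) (fun k => ?_)
      (((summable_geometric_of_lt_one (by norm_num) (by norm_num : (1/4:ℝ) < 1))).mul_left 4)
    calc (m k : ℝ) * (1/16 : ℝ)^k ≤ 4^(k+1) * (1/16 : ℝ)^k := by
          apply mul_le_mul_of_nonneg_right (hb k) (by positivity)
    _ = 4 * (1/4 : ℝ)^k := by
          rw [pow_succ, show (1/4 : ℝ) = 4 * (1/16) by norm_num, mul_pow]; ring
end

section
/- Let r > 0, let (b_k) be a sequence of complex numbers, and let φ : [0,∞) → ℂ be continuous such that φ(t) = Σ_{k≥0} b_k·t^k for all 0 ≤ t < r (the series converging there), and such that ‖φ(t)‖ ≤ C·e^{K·t} for all t ≥ 0, for some constants C, K > 0. Then for every N ∈ ℕ there exists a constant C_N > 0 such that for all real ℏ with 0 < ℏ ≤ 1/(K+1): ‖∫_0^∞ φ(t)·e^{−t/ℏ} dt − Σ_{k=0}^{N−1} b_k·k!·ℏ^{k+1}‖ ≤ C_N·ℏ^{N+1}. -/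
open MeasureTheory

open Real Set Finset

lemma aux_int_exp {c : ℝ} (hc : 0 < c) (δ : ℝ) :
    ∫ t in Ioi δ, Real.exp (-c * t) = Real.exp (-c * δ) / c := by
  have h := integral_comp_mul_left_Ioi (fun x => Real.exp (-x)) δ hc
  simp only [smul_eq_mul] at h
  rw [show (fun t => Real.exp (-c * t)) = fun t => (fun x => Real.exp (-x)) (c * t) from
    funext fun t => by rw [neg_mul], h, integral_exp_neg_Ioi, neg_mul]
  ring

lemma aux_moment {a : ℝ} (ha : 0 < a) (k : ℕ) :
    ∫ t in Ioi (0:ℝ), t ^ k * Real.exp (-(a * t)) = k.factorial / a ^ (k+1) := by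
  have h := integral_rpow_mul_exp_neg_mul_Ioi (a := (k+1:ℝ)) (r := a) (by positivity) ha
  rw [show ∫ t in Ioi (0:ℝ), t ^ k * Real.exp (-(a * t))
      = ∫ t in Ioi (0:ℝ), t ^ ((k+1:ℝ)-1) * Real.exp (-(a * t)) from
    setIntegral_congr_fun measurableSet_Ioi (fun t ht => by
      rw [show (k+1:ℝ)-1 = (k:ℝ) by ring, Real.rpow_natCast]), h]
  rw [show (k:ℝ)+1 = ((k+1:ℕ):ℝ) by push_cast; ring, Real.rpow_natCast,
    Nat.cast_add, Nat.cast_one, Real.Gamma_nat_eq_factorial, div_pow, one_pow]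
  ring

lemma tail_bound {b : ℕ → ℂ} {M ρ : ℝ} (hρ : 0 < ρ) (hM : ∀ k, ‖b k‖ * ρ^k ≤ M)
    (N : ℕ) {t : ℝ} (ht : 0 ≤ t) (ht2 : t ≤ ρ/2) {s : ℂ}
    (hs : HasSum (fun k => b k * (t:ℂ)^k) s) :
    ‖s - ∑ k ∈ range N, b k * (t:ℂ)^k‖ ≤ (2*M/ρ^N) * t^N := by
  have hsm := hs.summable
  have htρ0 : 0 ≤ t / ρ := by positivity
  have htρ : t / ρ ≤ 1/2 := by
    rw [div_le_iff₀ hρ]; linarith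
  have hMnn : 0 ≤ M := le_trans (by positivity) (hM 0)
  have hterm : ∀ j : ℕ, ‖b j * (t:ℂ)^j‖ ≤ M * (t/ρ)^j := by
    intro j
    rw [norm_mul, norm_pow, Complex.norm_real, Real.norm_eq_abs, abs_of_nonneg ht,
      div_pow]
    rw [← mul_div_assoc, le_div_iff₀ (by positivity)]
    calc ‖b j‖ * t ^ j * ρ ^ j = (‖b j‖ * ρ ^ j) * t ^ j := by ring
      _ ≤ M * t ^ j := by
          exact mul_le_mul_of_nonneg_right (hM j) (by positivity)
  have key : s - ∑ k ∈ range N, b k * (t:ℂ)^k = ∑' i, b (i+N) * (t:ℂ)^(i+N) := by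
    have h1 := Summable.sum_add_tsum_nat_add N hsm
    rw [hs.tsum_eq] at h1
    linear_combination -h1
  rw [key]
  have hg : Summable (fun i : ℕ => M * (t/ρ)^N * (1/2:ℝ)^i) :=
    (summable_geometric_of_lt_one (by norm_num) (by norm_num)).mul_left _
  have hbd : ∀ i : ℕ, ‖b (i+N) * (t:ℂ)^(i+N)‖ ≤ M * (t/ρ)^N * (1/2:ℝ)^i := by
    intro i
    refine (hterm (i+N)).trans ?_
    rw [pow_add]
    calc M * ((t/ρ)^i * (t/ρ)^N) ≤ M * ((1/2:ℝ)^i * (t/ρ)^N) := by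
          apply mul_le_mul_of_nonneg_left _ hMnn
          exact mul_le_mul_of_nonneg_right (pow_le_pow_left₀ htρ0 htρ i) (by positivity)
      _ = M * (t/ρ)^N * (1/2:ℝ)^i := by ring
  have hnormsum : Summable (fun i : ℕ => ‖b (i+N) * (t:ℂ)^(i+N)‖) :=
    Summable.of_nonneg_of_le (fun i => norm_nonneg _) hbd hg
  calc ‖∑' i, b (i+N) * (t:ℂ)^(i+N)‖ ≤ ∑' i, ‖b (i+N) * (t:ℂ)^(i+N)‖ :=
        norm_tsum_le_tsum_norm hnormsum
    _ ≤ ∑' i : ℕ, M * (t/ρ)^N * (1/2:ℝ)^i := Summable.tsum_le_tsum hbd hnormsum hg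
    _ = M * (t/ρ)^N * (1 - 1/2)⁻¹ := by
        rw [tsum_mul_left, tsum_geometric_of_lt_one (by norm_num) (by norm_num)]
    _ = (2*M/ρ^N) * t^N := by
        rw [div_pow]
        field_simp
        ring

set_option maxHeartbeats 1000000 in
/-- Asymptotic expansion of the Laplace transform: if `φ : [0,∞) → ℂ` is continuous,
exponentially bounded, and equals a convergent power series `Σ b_k t^k` on `[0,r)`,
then for each `N` the Laplace transform `∫₀^∞ φ(t)e^{−t/ℏ}dt` differs from the partial
sum `Σ_{k<N} b_k·k!·ℏ^{k+1}` by `O(ℏ^{N+1})` as `ℏ → 0⁺`. -/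
theorem laplace_transform_asymptotic_expansion
    (r C K : ℝ) (hr : 0 < r) (hC : 0 < C) (hK : 0 < K)
    (b : ℕ → ℂ) (φ : ℝ → ℂ) (hφc : ContinuousOn φ (Set.Ici 0))
    (hsum : ∀ t : ℝ, 0 ≤ t → t < r → HasSum (fun k => b k * (t : ℂ) ^ k) (φ t))
    (hφb : ∀ t : ℝ, 0 ≤ t → ‖φ t‖ ≤ C * Real.exp (K * t)) :
    ∀ N : ℕ, ∃ CN : ℝ, 0 < CN ∧
      ∀ ℏ : ℝ, 0 < ℏ → ℏ ≤ 1 / (K + 1) →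
        ‖(∫ t in Set.Ici (0 : ℝ), φ t * Complex.exp (-(t : ℂ) / (ℏ : ℂ)))
            - ∑ k ∈ Finset.range N, b k * (Nat.factorial k : ℂ) * (ℏ : ℂ) ^ (k + 1)‖
          ≤ CN * ℏ ^ (N + 1) := by
  intro N
  set ρ : ℝ := r/2 with hρdef
  clear_value ρ
  set δ : ℝ := r/4 with hδdef
  clear_value δ
  have hρ : 0 < ρ := by rw [hρdef]; linarith
  have hδ : 0 < δ := by rw [hδdef]; linarith
  -- coefficient bound
  have hsρ : HasSum (fun k => b k * (ρ:ℂ)^k) (φ ρ) := hsum ρ hρ.le (by rw [hρdef]; linarith)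
  have hsumnorm : Summable (fun k => ‖b k * (ρ:ℂ)^k‖) := summable_norm_iff.2 hsρ.summable
  set M : ℝ := (∑' k, ‖b k * (ρ:ℂ)^k‖) + 1 with hMdef
  have hM0 : 0 < M := by
    have h0 : (0:ℝ) ≤ ∑' k, ‖b k * (ρ:ℂ)^k‖ := tsum_nonneg fun k => norm_nonneg _
    rw [hMdef]; linarith
  have hM : ∀ k, ‖b k‖ * ρ^k ≤ M := by
    intro k
    have h1 := Summable.le_tsum hsumnorm k (fun j _ => norm_nonneg _)
    rw [norm_mul, norm_pow, Complex.norm_real, Real.norm_eq_abs, abs_of_nonneg hρ.le] at h1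
    rw [hMdef]; linarith
  clear_value M
  set M' : ℝ := 2*M/ρ^N with hM'def
  have hM'0 : 0 < M' := by rw [hM'def]; positivity
  -- remainder bound on [0, δ]
  have hrem : ∀ t : ℝ, 0 ≤ t → t ≤ δ →
      ‖φ t - ∑ k ∈ range N, b k * (t:ℂ)^k‖ ≤ M' * t^N := by
    intro t ht ht2
    rw [hM'def]
    exact tail_bound hρ hM N ht (by rw [hρdef]; rw [hδdef] at ht2; linarith)
      (hsum t ht (by rw [hδdef] at ht2; linarith))
  clear_value M'
  -- global bound
  set K₁ : ℝ := K + 1/2 with hK₁def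
  clear_value K₁
  set D : ℝ := C + ∑ k ∈ range N, ‖b k‖ * (k.factorial : ℝ) * 2^k with hDdef
  have hD0 : 0 < D := by
    rw [hDdef]
    have h0 : (0:ℝ) ≤ ∑ k ∈ range N, ‖b k‖ * (k.factorial : ℝ) * 2^k :=
      Finset.sum_nonneg (fun k _ => by positivity)
    linarith
  have hglob : ∀ t : ℝ, 0 ≤ t →
      ‖φ t - ∑ k ∈ range N, b k * (t:ℂ)^k‖ ≤ D * Real.exp (K₁ * t) := by
    intro t ht
    have h1 : ‖φ t‖ ≤ C * Real.exp (K₁ * t) := by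
      refine (hφb t ht).trans ?_
      apply mul_le_mul_of_nonneg_left _ hC.le
      apply Real.exp_le_exp.2
      rw [hK₁def]; nlinarith
    have h2 : ‖∑ k ∈ range N, b k * (t:ℂ)^k‖
        ≤ (∑ k ∈ range N, ‖b k‖ * (k.factorial : ℝ) * 2^k) * Real.exp (K₁ * t) := by
      refine (norm_sum_le _ _).trans ?_
      rw [Finset.sum_mul]
      apply Finset.sum_le_sum
      intro k _
      rw [norm_mul, norm_pow, Complex.norm_real, Real.norm_eq_abs, abs_of_nonneg ht]
      have hp : t^k ≤ (k.factorial : ℝ) * 2^k * Real.exp (K₁ * t) := by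
        have h3 := Real.pow_div_factorial_le_exp (x := t/2) (by positivity) k
        rw [div_pow, div_div] at h3
        have h4 : t^k ≤ Real.exp (t/2) * ((k.factorial : ℝ) * 2^k) := by
          rw [div_le_iff₀ (by positivity)] at h3
          calc t^k ≤ Real.exp (t/2) * (2^k * (k.factorial : ℝ)) := h3
            _ = Real.exp (t/2) * ((k.factorial : ℝ) * 2^k) := by ring
        have h5 : Real.exp (t/2) ≤ Real.exp (K₁ * t) := by
          apply Real.exp_le_exp.2
          rw [hK₁def]; nlinarith
        calc t^k ≤ Real.exp (t/2) * ((k.factorial : ℝ) * 2^k) := h4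
          _ ≤ Real.exp (K₁ * t) * ((k.factorial : ℝ) * 2^k) := by
              apply mul_le_mul_of_nonneg_right h5 (by positivity)
          _ = (k.factorial : ℝ) * 2^k * Real.exp (K₁ * t) := by ring
      calc ‖b k‖ * t^k ≤ ‖b k‖ * ((k.factorial : ℝ) * 2^k * Real.exp (K₁ * t)) :=
            mul_le_mul_of_nonneg_left hp (norm_nonneg _)
        _ = ‖b k‖ * (k.factorial : ℝ) * 2^k * Real.exp (K₁ * t) := by ring
    calc ‖φ t - ∑ k ∈ range N, b k * (t:ℂ)^k‖
        ≤ ‖φ t‖ + ‖∑ k ∈ range N, b k * (t:ℂ)^k‖ := norm_sub_le _ _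
      _ ≤ C * Real.exp (K₁ * t)
          + (∑ k ∈ range N, ‖b k‖ * (k.factorial : ℝ) * 2^k) * Real.exp (K₁ * t) :=
            add_le_add h1 h2
      _ = D * Real.exp (K₁ * t) := by rw [hDdef]; ring
  clear_value D
  have hK₁K : K < K₁ ∧ 1/2 ≤ K₁ := by constructor <;> (rw [hK₁def]; linarith)
  -- final constant
  have hfacN : (0:ℝ) < (N.factorial : ℝ) := by exact_mod_cast N.factorial_pos
  have hfacN1 : (0:ℝ) < ((N+1).factorial : ℝ) := by exact_mod_cast (N+1).factorial_pos
  have hCN0 : 0 < M' * (N.factorial : ℝ)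
      + 2*D*Real.exp (K₁*δ)*((N+1).factorial : ℝ)/δ^(N+1) := by
    have e1 := Real.exp_pos (K₁*δ)
    have e2 := pow_pos hδ (N+1)
    have : 0 < 2*D*Real.exp (K₁*δ)*((N+1).factorial : ℝ)/δ^(N+1) := by positivity
    nlinarith [mul_pos hM'0 hfacN]
  refine ⟨M' * (N.factorial : ℝ)
      + 2*D*Real.exp (K₁*δ)*((N+1).factorial : ℝ)/δ^(N+1), hCN0, ?_⟩
  intro ℏ hℏ hℏK
  set a : ℝ := 1/ℏ with hadef
  have ha : 0 < a := by rw [hadef]; positivity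
  clear_value a
  have haK : K + 1 ≤ a := by
    rw [hadef, le_div_iff₀ hℏ]
    calc (K+1) * ℏ ≤ (K+1) * (1/(K+1)) := by
          apply mul_le_mul_of_nonneg_left hℏK (by linarith)
      _ = 1 := by field_simp
  have haK₁ : 1/2 ≤ a - K₁ := by rw [hK₁def]; linarith
  have haK₁' : 0 < a - K₁ := lt_of_lt_of_le (by norm_num) haK₁
  set g : ℝ → ℝ := fun t => Real.exp (-(a*t)) with hgdef
  have hgpos : ∀ t, 0 < g t := fun t => by rw [hgdef]; exact Real.exp_pos _
  have hcexp : ∀ t : ℝ, Complex.exp (-(t:ℂ)/(ℏ:ℂ)) = ((g t : ℝ) : ℂ) := by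
    intro t
    rw [hgdef]
    simp only [Complex.ofReal_exp]
    congr 1
    rw [hadef]
    push_cast
    field_simp
  clear_value g
  set P : ℝ → ℂ := fun t => ∑ k ∈ range N, b k * (t:ℂ)^k with hPdef
  -- integrability
  have hbd_int : ∀ x : ℝ, IntegrableOn (fun t => Real.exp (-(a - K₁) * t)) (Ioi x) :=
    fun x => exp_neg_integrableOn_Ioi x haK₁'
  have hI1 : IntegrableOn (fun t => φ t * (g t : ℂ)) (Ioi 0) := by
    apply Integrable.mono' ((hbd_int 0).const_mul C)
    · apply ContinuousOn.aestronglyMeasurable _ measurableSet_Ioi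
      apply ContinuousOn.mul (hφc.mono (Ioi_subset_Ici le_rfl))
      apply Continuous.continuousOn
      rw [hgdef]
      continuity
    · rw [ae_restrict_iff' measurableSet_Ioi]
      filter_upwards with t
      intro ht
      have ht0 : (0:ℝ) < t := ht
      rw [norm_mul, Complex.norm_real, Real.norm_eq_abs, abs_of_nonneg (hgpos t).le, hgdef]
      calc ‖φ t‖ * Real.exp (-(a*t)) ≤ (C * Real.exp (K*t)) * Real.exp (-(a*t)) := by
            apply mul_le_mul_of_nonneg_right (hφb t ht0.le) (Real.exp_pos _).le
        _ = C * (Real.exp (K*t) * Real.exp (-(a*t))) := by ring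
        _ = C * Real.exp (K*t + -(a*t)) := by rw [← Real.exp_add]
        _ ≤ C * Real.exp (-(a-K₁) * t) := by
            apply mul_le_mul_of_nonneg_left _ hC.le
            apply Real.exp_le_exp.2
            rw [hK₁def]; nlinarith
  have hIrk : ∀ k : ℕ, IntegrableOn (fun t => t^k * g t) (Ioi 0) := by
    intro k
    apply Integrable.mono' ((hbd_int 0).const_mul ((k.factorial : ℝ) * 2^k))
    · apply Continuous.aestronglyMeasurable ?_ |>.restrict
      rw [hgdef]; continuity
    · rw [ae_restrict_iff' measurableSet_Ioi]
      filter_upwards with t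
      intro ht
      have ht0 : (0:ℝ) < t := ht
      rw [Real.norm_eq_abs, abs_of_nonneg (mul_nonneg (by positivity) (hgpos t).le), hgdef]
      have h3 := Real.pow_div_factorial_le_exp (x := t/2) (by positivity) k
      rw [div_pow, div_div] at h3
      have h4 : t^k ≤ Real.exp (t/2) * ((k.factorial : ℝ) * 2^k) := by
        rw [div_le_iff₀ (by positivity)] at h3
        calc t^k ≤ Real.exp (t/2) * (2^k * (k.factorial : ℝ)) := h3
          _ = Real.exp (t/2) * ((k.factorial : ℝ) * 2^k) := by ring
      calc t^k * Real.exp (-(a*t))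
          ≤ (Real.exp (t/2) * ((k.factorial : ℝ) * 2^k)) * Real.exp (-(a*t)) := by
            apply mul_le_mul_of_nonneg_right h4 (Real.exp_pos _).le
        _ = ((k.factorial : ℝ) * 2^k) * (Real.exp (t/2) * Real.exp (-(a*t))) := by ring
        _ = ((k.factorial : ℝ) * 2^k) * Real.exp (t/2 + -(a*t)) := by rw [← Real.exp_add]
        _ ≤ ((k.factorial : ℝ) * 2^k) * Real.exp (-(a-K₁) * t) := by
            apply mul_le_mul_of_nonneg_left _ (by positivity)
            apply Real.exp_le_exp.2
            rw [hK₁def]; nlinarith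
  have hIk : ∀ k : ℕ, IntegrableOn (fun t : ℝ => (t:ℂ)^k * (g t : ℂ)) (Ioi 0) := by
    intro k
    have heq : (fun t : ℝ => (t:ℂ)^k * (g t : ℂ)) = fun t => ((t^k * g t : ℝ) : ℂ) := by
      funext t; push_cast; ring
    rw [heq]
    exact Integrable.ofReal (hIrk k)
  have hPint : IntegrableOn (fun t => P t * (g t : ℂ)) (Ioi 0) := by
    have heq : (fun t : ℝ => P t * (g t : ℂ))
        = fun t : ℝ => ∑ k ∈ range N, b k * ((t:ℂ)^k * (g t : ℂ)) := by
      funext t; rw [hPdef]; rw [Finset.sum_mul]; congr 1; funext k; ring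
    rw [heq]
    exact integrable_finset_sum _ (fun k _ => (hIk k).const_mul (b k))
  -- moment values
  have hmomC : ∀ k : ℕ, (∫ t in Ioi (0:ℝ), (t:ℂ)^k * (g t : ℂ))
      = (((k.factorial : ℝ) / a^(k+1) : ℝ) : ℂ) := by
    intro k
    rw [show (fun t : ℝ => (t:ℂ)^k * (g t : ℂ)) = fun t : ℝ => ((t^k * g t : ℝ) : ℂ) from
      funext fun t => by push_cast; ring]
    have h1 : (∫ t in Ioi (0:ℝ), ((t^k * g t : ℝ) : ℂ))
        = ((∫ t in Ioi (0:ℝ), t^k * g t : ℝ) : ℂ) := integral_ofReal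
    rw [h1]
    congr 1
    simp only [hgdef]
    exact aux_moment ha k
  have hcast : ∀ k : ℕ, (((k.factorial : ℝ) / a^(k+1) : ℝ) : ℂ)
      = (k.factorial : ℂ) * (ℏ:ℂ)^(k+1) := by
    intro k
    rw [hadef]
    push_cast
    rw [one_div, inv_pow, div_inv_eq_mul]
  -- expansion of polynomial part
  have hP : (∫ t in Ioi (0:ℝ), P t * (g t : ℂ))
      = ∑ k ∈ range N, b k * (k.factorial : ℂ) * (ℏ:ℂ)^(k+1) := by
    rw [show (fun t : ℝ => P t * (g t : ℂ))
        = fun t : ℝ => ∑ k ∈ range N, b k * ((t:ℂ)^k * (g t : ℂ)) from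
      funext fun t => by rw [hPdef, Finset.sum_mul]; congr 1; funext k; ring]
    rw [integral_finset_sum _ (fun k _ => (hIk k).const_mul (b k))]
    apply Finset.sum_congr rfl
    intro k _
    rw [integral_const_mul, hmomC k, hcast k, mul_assoc]
  -- main identity
  have hψ : IntegrableOn (fun t => (φ t - P t) * (g t : ℂ)) (Ioi 0) := by
    have heq : (fun t : ℝ => (φ t - P t) * (g t : ℂ))
        = fun t => φ t * (g t : ℂ) - P t * (g t : ℂ) := by funext t; ring
    rw [heq]
    exact hI1.sub hPint
  have hEq : (∫ t in Set.Ici (0:ℝ), φ t * Complex.exp (-(t:ℂ)/(ℏ:ℂ)))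
      - ∑ k ∈ range N, b k * (Nat.factorial k : ℂ) * (ℏ:ℂ)^(k+1)
      = ∫ t in Ioi (0:ℝ), (φ t - P t) * (g t : ℂ) := by
    rw [integral_Ici_eq_integral_Ioi]
    rw [show (fun t : ℝ => φ t * Complex.exp (-(t:ℂ)/(ℏ:ℂ))) = fun t => φ t * (g t : ℂ) from
      funext fun t => by rw [hcexp t]]
    rw [← hP, ← integral_sub hI1 hPint]
    congr 1
    funext t
    ring
  rw [hEq]
  -- split the integral
  have hsplit : (∫ t in Ioi (0:ℝ), (φ t - P t) * (g t : ℂ))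
      = (∫ t in Ioc (0:ℝ) δ, (φ t - P t) * (g t : ℂ))
        + ∫ t in Ioi δ, (φ t - P t) * (g t : ℂ) := by
    rw [← setIntegral_union (Ioc_disjoint_Ioi le_rfl) measurableSet_Ioi
      (hψ.mono_set Ioc_subset_Ioi_self) (hψ.mono_set (Ioi_subset_Ioi hδ.le)),
      Ioc_union_Ioi_eq_Ioi hδ.le]
  rw [hsplit]
  -- bound part 1
  have hpart1 : ‖∫ t in Ioc (0:ℝ) δ, (φ t - P t) * (g t : ℂ)‖
      ≤ M' * (N.factorial : ℝ) * ℏ^(N+1) := by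
    have hb1 : ‖∫ t in Ioc (0:ℝ) δ, (φ t - P t) * (g t : ℂ)‖
        ≤ ∫ t in Ioc (0:ℝ) δ, M' * (t^N * g t) := by
      apply norm_integral_le_of_norm_le (((hIrk N).mono_set Ioc_subset_Ioi_self).const_mul M')
      rw [ae_restrict_iff' measurableSet_Ioc]
      filter_upwards with t
      intro ht
      rw [norm_mul, Complex.norm_real, Real.norm_eq_abs, abs_of_nonneg (hgpos t).le]
      have hh : ‖φ t - P t‖ ≤ M' * t^N := by rw [hPdef]; exact hrem t ht.1.le ht.2
      calc ‖φ t - P t‖ * g t ≤ (M' * t^N) * g t :=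
            mul_le_mul_of_nonneg_right hh (hgpos t).le
        _ = M' * (t^N * g t) := by ring
    have hb2 : (∫ t in Ioc (0:ℝ) δ, M' * (t^N * g t))
        ≤ ∫ t in Ioi (0:ℝ), M' * (t^N * g t) := by
      apply setIntegral_mono_set ((hIrk N).const_mul M')
      · filter_upwards [ae_restrict_mem measurableSet_Ioi] with t ht
        have ht0 : (0:ℝ) < t := ht
        exact mul_nonneg hM'0.le (mul_nonneg (pow_nonneg ht0.le N) (hgpos t).le)
      · exact HasSubset.Subset.eventuallyLE Ioc_subset_Ioi_self
    have hb3 : (∫ t in Ioi (0:ℝ), M' * (t^N * g t)) = M' * (N.factorial : ℝ) * ℏ^(N+1) := by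
      rw [integral_const_mul]
      simp only [hgdef]
      rw [aux_moment ha N, hadef]
      rw [mul_assoc]
      congr 1
      rw [div_eq_mul_inv, ← inv_pow, one_div, inv_inv]
    exact hb1.trans (hb2.trans_eq hb3)
  -- bound part 2
  have hpart2 : ‖∫ t in Ioi δ, (φ t - P t) * (g t : ℂ)‖
      ≤ 2*D*Real.exp (K₁*δ)*((N+1).factorial : ℝ)/δ^(N+1) * ℏ^(N+1) := by
    have hb1 : ‖∫ t in Ioi δ, (φ t - P t) * (g t : ℂ)‖
        ≤ ∫ t in Ioi δ, D * Real.exp (-(a-K₁) * t) := by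
      apply norm_integral_le_of_norm_le ((hbd_int δ).const_mul D)
      rw [ae_restrict_iff' measurableSet_Ioi]
      filter_upwards with t
      intro ht
      have ht0 : (0:ℝ) < t := lt_trans hδ ht
      rw [norm_mul, Complex.norm_real, Real.norm_eq_abs, abs_of_nonneg (hgpos t).le]
      have hh : ‖φ t - P t‖ ≤ D * Real.exp (K₁*t) := by rw [hPdef]; exact hglob t ht0.le
      calc ‖φ t - P t‖ * g t ≤ (D * Real.exp (K₁*t)) * g t :=
            mul_le_mul_of_nonneg_right hh (hgpos t).le
        _ = D * (Real.exp (K₁*t) * Real.exp (-(a*t))) := by rw [hgdef]; ring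
        _ = D * Real.exp (K₁*t + -(a*t)) := by rw [← Real.exp_add]
        _ = D * Real.exp (-(a-K₁) * t) := by ring_nf
    have hb2 : (∫ t in Ioi δ, D * Real.exp (-(a-K₁) * t))
        = D * (Real.exp (-(a-K₁) * δ) / (a-K₁)) := by
      rw [integral_const_mul, aux_int_exp haK₁' δ]
    have he1 : Real.exp (-(a-K₁) * δ) = Real.exp (K₁*δ) * Real.exp (-(a*δ)) := by
      rw [← Real.exp_add]
      congr 1
      ring
    have h3 := Real.pow_div_factorial_le_exp (x := a*δ) (by positivity) (N+1)
    have hXpos : (0:ℝ) < (a*δ)^(N+1) / ((N+1).factorial : ℝ) := by positivity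
    have h6 : Real.exp (-(a*δ)) ≤ ((N+1).factorial : ℝ) / (a*δ)^(N+1) := by
      rw [Real.exp_neg]
      calc (Real.exp (a*δ))⁻¹ ≤ ((a*δ)^(N+1) / ((N+1).factorial : ℝ))⁻¹ :=
            inv_anti₀ hXpos h3
        _ = ((N+1).factorial : ℝ) / (a*δ)^(N+1) := by rw [inv_div]
    have h7 : ((N+1).factorial : ℝ) / (a*δ)^(N+1)
        = ((N+1).factorial : ℝ) * ℏ^(N+1) / δ^(N+1) := by
      have hℏ' : ℏ ≠ 0 := ne_of_gt hℏ
      have hδ' : δ ≠ 0 := ne_of_gt hδ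
      rw [hadef]
      field_simp
      rw [div_pow, div_mul_cancel₀ _ (pow_ne_zero _ hℏ')]
    have hb3 : D * (Real.exp (-(a-K₁) * δ) / (a-K₁))
        ≤ 2*D*Real.exp (K₁*δ)*((N+1).factorial : ℝ)/δ^(N+1) * ℏ^(N+1) := by
      have hx0 : 0 ≤ Real.exp (K₁*δ) * Real.exp (-(a*δ)) :=
        mul_nonneg (Real.exp_pos _).le (Real.exp_pos _).le
      calc D * (Real.exp (-(a-K₁) * δ) / (a-K₁))
          = D * (Real.exp (K₁*δ) * Real.exp (-(a*δ)) / (a-K₁)) := by rw [he1]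
        _ ≤ D * (Real.exp (K₁*δ) * Real.exp (-(a*δ)) * 2) := by
            apply mul_le_mul_of_nonneg_left _ hD0.le
            rw [div_le_iff₀ haK₁']
            nlinarith [hx0]
        _ ≤ D * (Real.exp (K₁*δ) * (((N+1).factorial : ℝ) * ℏ^(N+1) / δ^(N+1)) * 2) := by
            apply mul_le_mul_of_nonneg_left _ hD0.le
            apply mul_le_mul_of_nonneg_right _ (by norm_num)
            apply mul_le_mul_of_nonneg_left _ (Real.exp_pos _).le
            rw [← h7]; exact h6
        _ = 2*D*Real.exp (K₁*δ)*((N+1).factorial : ℝ)/δ^(N+1) * ℏ^(N+1) := by ring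
    calc ‖∫ t in Ioi δ, (φ t - P t) * (g t : ℂ)‖
        ≤ ∫ t in Ioi δ, D * Real.exp (-(a-K₁) * t) := hb1
      _ = D * (Real.exp (-(a-K₁) * δ) / (a-K₁)) := hb2
      _ ≤ _ := hb3
  calc ‖(∫ t in Ioc (0:ℝ) δ, (φ t - P t) * (g t : ℂ))
        + ∫ t in Ioi δ, (φ t - P t) * (g t : ℂ)‖
      ≤ ‖∫ t in Ioc (0:ℝ) δ, (φ t - P t) * (g t : ℂ)‖
        + ‖∫ t in Ioi δ, (φ t - P t) * (g t : ℂ)‖ := norm_add_le _ _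
    _ ≤ M' * (N.factorial : ℝ) * ℏ^(N+1)
        + 2*D*Real.exp (K₁*δ)*((N+1).factorial : ℝ)/δ^(N+1) * ℏ^(N+1) :=
          add_le_add hpart1 hpart2
    _ = (M' * (N.factorial : ℝ)
        + 2*D*Real.exp (K₁*δ)*((N+1).factorial : ℝ)/δ^(N+1)) * ℏ^(N+1) := by ring
end

section
/- Consider the recursive Volterra system: fix real constants C ≥ 1 and L ≥ 0, a constant c ∈ ℂ with ‖c‖ ≤ C, and continuous functions w, ω : [0,∞) → ℂ with ‖w(τ)‖ ≤ C and ‖ω(τ)‖ ≤ C·e^{L·τ} for all τ ≥ 0; define continuous functions φ_k : [0,∞) → ℂ by φ_0(τ) = c, φ_1(τ) = ∫_0^τ (w(r)·φ_0(r) + ω(r)) dr, and for k ≥ 2, φ_k(τ) = ∫_0^τ (Σ_{i+j=k−2} (φ_i ∗ φ_j)(r) + w(r)·φ_{k−1}(r)) dr. Define real numbers M_k by M_0 = C, M_1 = C·(C+1), and M_k = Σ_{i+j=k−2} M_i·M_j + C·M_{k−1} for k ≥ 2. Then for every k ≥ 0 and every τ ≥ 0: ‖φ_k(τ)‖ ≤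 M_k·(τ^k/k!)·e^{L·τ}. -/
open intervalIntegral MeasureTheory

lemma beta_nat (i j : ℕ) (x : ℝ) :
    ∫ s in (0:ℝ)..x, s ^ i * (x - s) ^ j
      = (i.factorial * j.factorial / (i + j + 1).factorial : ℝ) * x ^ (i + j + 1) := by
  induction j generalizing i with
  | zero =>
    simp only [pow_zero, mul_one, integral_pow, Nat.factorial_zero, Nat.add_zero,
      Nat.factorial_succ, Nat.cast_mul, Nat.cast_add, Nat.cast_one]
    have : ((i.factorial : ℝ)) ≠ 0 := Nat.cast_ne_zero.2 i.factorial_ne_zero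
    field_simp
    ring
  | succ j ih =>
    have hu : ∀ s ∈ Set.uIcc (0:ℝ) x,
        HasDerivAt (fun t => (x - t) ^ (j + 1)) (-((j + 1 : ℝ) * (x - s) ^ j)) s := by
      intro s _
      have h1 : HasDerivAt (fun t : ℝ => x - t) (-1) s := by
        simpa using (hasDerivAt_id s).const_sub x
      have := h1.fun_pow (j + 1)
      simpa [mul_comm, mul_assoc, mul_left_comm] using this
    have hv : ∀ s ∈ Set.uIcc (0:ℝ) x,
        HasDerivAt (fun t : ℝ => t ^ (i + 1) / (i + 1 : ℝ)) (s ^ i) s := by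
      intro s _
      have := (hasDerivAt_pow (i + 1) s).div_const (i + 1 : ℝ)
      have h2 : (↑(i + 1) * s ^ (i + 1 - 1)) / (i + 1 : ℝ) = s ^ i := by
        have : ((i : ℝ) + 1) ≠ 0 := by positivity
        push_cast
        field_simp
      rwa [h2] at this
    have hIBP := integral_mul_deriv_eq_deriv_mul hu hv
      (Continuous.intervalIntegrable (by continuity) 0 x)
      (Continuous.intervalIntegrable (by continuity) 0 x)
    have hL : (∫ s in (0:ℝ)..x, s ^ i * (x - s) ^ (j + 1))
        = ∫ s in (0:ℝ)..x, (x - s) ^ (j + 1) * s ^ i := by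
      apply integral_congr; intro s _; ring
    rw [hL, hIBP]
    have hR : (∫ s in (0:ℝ)..x, -((j + 1 : ℝ) * (x - s) ^ j) * (s ^ (i + 1) / (i + 1 : ℝ)))
        = (-((j + 1 : ℝ) / (i + 1 : ℝ))) * ∫ s in (0:ℝ)..x, s ^ (i + 1) * (x - s) ^ j := by
      rw [← intervalIntegral.integral_const_mul]
      apply integral_congr; intro s _; ring
    rw [hR, ih (i + 1)]
    have h1 : ((i + 1).factorial : ℝ) = (i + 1) * i.factorial := by
      rw [Nat.factorial_succ]; push_cast; ring
    have h2 : ((j + 1).factorial : ℝ) = (j + 1) * j.factorial := by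
      rw [Nat.factorial_succ]; push_cast; ring
    have h3 : (i + 1 + j + 1) = (i + (j + 1) + 1) := by omega
    have h4 : ((i + (j+1) + 1).factorial : ℝ) ≠ 0 := Nat.cast_ne_zero.2 (Nat.factorial_ne_zero _)
    have h5 : ((i:ℝ) + 1) ≠ 0 := by positivity
    rw [h3]
    rw [h1, h2]; field_simp
    ring

/-- Inductive bounds for the recursive Volterra system of successive approximations:
with data bounded by `C ≥ 1` and `L ≥ 0`, the terms `φ_k` of the recursive system
satisfy `‖φ_k(τ)‖ ≤ M_k·(τ^k/k!)·e^{Lτ}`, where `M_0 = C`, `M_1 = C(C+1)` and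
`M_k = Σ_{i+j=k−2} M_i M_j + C·M_{k−1}` for `k ≥ 2`. -/
theorem volterra_system_inductive_bounds
    (C L : ℝ) (hC : 1 ≤ C) (hL : 0 ≤ L)
    (c : ℂ) (hc : ‖c‖ ≤ C)
    (w ω : ℝ → ℂ)
    (hwc : ContinuousOn w (Set.Ici 0)) (hωc : ContinuousOn ω (Set.Ici 0))
    (hwb : ∀ τ : ℝ, 0 ≤ τ → ‖w τ‖ ≤ C)
    (hωb : ∀ τ : ℝ, 0 ≤ τ → ‖ω τ‖ ≤ C * Real.exp (L * τ))
    (φ : ℕ → ℝ → ℂ) (hφc : ∀ k, ContinuousOn (φ k) (Set.Ici 0))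
    (hφ0 : ∀ τ : ℝ, φ 0 τ = c)
    (hφ1 : ∀ τ : ℝ, φ 1 τ = ∫ x in (0 : ℝ)..τ, (w x * φ 0 x + ω x))
    (hφk : ∀ k, 2 ≤ k → ∀ τ : ℝ, φ k τ
      = ∫ x in (0 : ℝ)..τ,
          ((∑ p ∈ Finset.HasAntidiagonal.antidiagonal (k - 2),
              ∫ s in (0 : ℝ)..x, φ p.1 s * φ p.2 (x - s))
            + w x * φ (k - 1) x))
    (M : ℕ → ℝ) (hM0 : M 0 = C) (hM1 : M 1 = C * (C + 1))
    (hMk : ∀ k, 2 ≤ k →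
      M k = (∑ p ∈ Finset.HasAntidiagonal.antidiagonal (k - 2), M p.1 * M p.2) + C * M (k - 1)) :
    ∀ k : ℕ, ∀ τ : ℝ, 0 ≤ τ →
      ‖φ k τ‖ ≤ M k * (τ ^ k / (Nat.factorial k : ℝ)) * Real.exp (L * τ) := by
  have hC0 : (0:ℝ) ≤ C := by linarith
  have hMpos : ∀ k, 0 ≤ M k := by
    intro k
    induction k using Nat.strong_induction_on with
    | _ k ih =>
      rcases k with _ | _ | n
      · rw [hM0]; linarith
      · rw [hM1]; nlinarith
      · rw [hMk (n + 2) (by omega)]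
        have h2 : n + 2 - 2 = n := rfl
        have h1 : n + 2 - 1 = n + 1 := rfl
        rw [h2, h1]
        refine add_nonneg (Finset.sum_nonneg fun p hp => ?_) (mul_nonneg hC0 (ih _ (by omega)))
        have hpm := Finset.HasAntidiagonal.mem_antidiagonal.1 hp
        exact mul_nonneg (ih p.1 (by omega)) (ih p.2 (by omega))
  have hexp1 : ∀ t : ℝ, 0 ≤ t → 1 ≤ Real.exp (L * t) :=
    fun t ht => Real.one_le_exp (mul_nonneg hL ht)
  intro k
  induction k using Nat.strong_induction_on with
  | _ k ih =>
    rcases k with _ | _ | n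
    · -- k = 0
      intro τ hτ
      rw [hφ0]
      simp only [pow_zero, Nat.factorial_zero, Nat.cast_one]
      have := hexp1 τ hτ
      have hM := hMpos 0
      rw [hM0] at hM ⊢
      nlinarith
    · -- k = 1
      intro τ hτ
      rw [hφ1]
      have hbd : ∀ᵐ t ∂(volume.restrict (Set.uIoc (0:ℝ) τ)),
          ‖w t * φ 0 t + ω t‖ ≤ C * (C + 1) * Real.exp (L * τ) := by
        refine ae_restrict_of_forall_mem measurableSet_uIoc fun t ht => ?_
        rw [Set.uIoc_of_le hτ] at ht
        have ht0 : (0:ℝ) ≤ t := ht.1.le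
        have h1 : ‖w t * φ 0 t‖ ≤ C * C := by
          rw [norm_mul, hφ0]
          exact mul_le_mul (hwb t ht0) hc (norm_nonneg _) hC0
        have h2 : ‖ω t‖ ≤ C * Real.exp (L * τ) := by
          refine (hωb t ht0).trans ?_
          have : Real.exp (L * t) ≤ Real.exp (L * τ) :=
            Real.exp_le_exp.2 (mul_le_mul_of_nonneg_left ht.2 hL)
          nlinarith
        have h3 := hexp1 τ hτ
        calc ‖w t * φ 0 t + ω t‖ ≤ ‖w t * φ 0 t‖ + ‖ω t‖ := norm_add_le _ _
          _ ≤ C * C + C * Real.exp (L * τ) := add_le_add h1 h2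
          _ ≤ C * (C + 1) * Real.exp (L * τ) := by nlinarith
      have key := intervalIntegral.norm_integral_le_abs_of_norm_le hbd
        (intervalIntegrable_const)
      rw [intervalIntegral.integral_const, smul_eq_mul, sub_zero,
        abs_of_nonneg (by positivity)] at key
      rw [hM1]
      calc ‖∫ x in (0:ℝ)..τ, (w x * φ 0 x + ω x)‖
          ≤ τ * (C * (C + 1) * Real.exp (L * τ)) := key
        _ = C * (C + 1) * (τ ^ 1 / (Nat.factorial 1 : ℝ)) * Real.exp (L * τ) := by
            norm_num [Nat.factorial]; ring
    · -- k = n + 2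
      intro τ hτ
      have h2 : (n + 2) - 2 = n := rfl
      have h1 : (n + 2) - 1 = n + 1 := rfl
      have hfact1 : ((n+1).factorial : ℝ) ≠ 0 := Nat.cast_ne_zero.2 (Nat.factorial_ne_zero _)
      -- convolution bound
      have ihconv : ∀ x : ℝ, 0 ≤ x → ∀ p ∈ Finset.HasAntidiagonal.antidiagonal n,
          ‖∫ s in (0:ℝ)..x, φ p.1 s * φ p.2 (x - s)‖
            ≤ M p.1 * M p.2 * (x ^ (n+1) / ((n+1).factorial : ℝ)) * Real.exp (L * x) := by
        intro x hx p hp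
        have hij : p.1 + p.2 = n := Finset.HasAntidiagonal.mem_antidiagonal.1 hp
        have hi := ih p.1 (by omega)
        have hj := ih p.2 (by omega)
        set g : ℝ → ℝ := fun s =>
          (M p.1 * (s ^ p.1 / (p.1.factorial : ℝ)) * Real.exp (L * s)) *
          (M p.2 * ((x - s) ^ p.2 / (p.2.factorial : ℝ)) * Real.exp (L * (x - s))) with hg
        have hae : ∀ᵐ t ∂(volume.restrict (Set.uIoc (0:ℝ) x)),
            ‖φ p.1 t * φ p.2 (x - t)‖ ≤ g t := by
          refine ae_restrict_of_forall_mem measurableSet_uIoc fun t ht => ?_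
          rw [Set.uIoc_of_le hx] at ht
          have ht0 : (0:ℝ) ≤ t := ht.1.le
          have htx : (0:ℝ) ≤ x - t := by linarith [ht.2]
          rw [norm_mul]
          have hb1 := hi t ht0
          have hb2 := hj (x - t) htx
          refine mul_le_mul hb1 hb2 (norm_nonneg _) ?_
          have := hMpos p.1
          positivity
        have hgint : IntervalIntegrable g volume 0 x :=
          (Continuous.intervalIntegrable (by rw [hg]; fun_prop) 0 x)
        have key := intervalIntegral.norm_integral_le_abs_of_norm_le hae hgint
        have hf1 : ((p.1.factorial : ℝ)) ≠ 0 := Nat.cast_ne_zero.2 (Nat.factorial_ne_zero _)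
        have hf2 : ((p.2.factorial : ℝ)) ≠ 0 := Nat.cast_ne_zero.2 (Nat.factorial_ne_zero _)
        have hgval : (∫ s in (0:ℝ)..x, g s)
            = M p.1 * M p.2 * (x ^ (n+1) / ((n+1).factorial : ℝ)) * Real.exp (L * x) := by
          have step1 : (∫ s in (0:ℝ)..x, g s)
              = (M p.1 * M p.2 / ((p.1.factorial : ℝ) * (p.2.factorial : ℝ)) * Real.exp (L * x))
                * ∫ s in (0:ℝ)..x, s ^ p.1 * (x - s) ^ p.2 := by
            rw [← intervalIntegral.integral_const_mul]
            apply integral_congr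
            intro s _
            have he : Real.exp (L * s) * Real.exp (L * (x - s)) = Real.exp (L * x) := by
              rw [← Real.exp_add]; ring_nf
            have : g s = (M p.1 * (s ^ p.1 / (p.1.factorial : ℝ))) *
                (M p.2 * ((x - s) ^ p.2 / (p.2.factorial : ℝ))) *
                (Real.exp (L * s) * Real.exp (L * (x - s))) := by rw [hg]; ring
            rw [this, he]
            field_simp
          rw [step1, beta_nat p.1 p.2 x]
          have hsum : p.1 + p.2 + 1 = n + 1 := by omega
          rw [hsum]
          field_simp
        rw [hgval] at key
        have hnn : (0:ℝ) ≤ M p.1 * M p.2 * (x ^ (n+1) / ((n+1).factorial : ℝ)) * Real.exp (L * x) := by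
          have := hMpos p.1
          have := hMpos p.2
          positivity
        rwa [abs_of_nonneg hnn] at key
      -- outer bound
      set K : ℝ := M (n+2) / ((n+1).factorial : ℝ) * Real.exp (L * τ) with hK
      have hout : ∀ x ∈ Set.Ioc (0:ℝ) τ,
          ‖(∑ p ∈ Finset.HasAntidiagonal.antidiagonal n,
              ∫ s in (0:ℝ)..x, φ p.1 s * φ p.2 (x - s)) + w x * φ (n+1) x‖
            ≤ K * x ^ (n+1) := by
        intro x hx
        have hx0 : (0:ℝ) ≤ x := hx.1.le
        have hsum : ‖∑ p ∈ Finset.HasAntidiagonal.antidiagonal n,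
            ∫ s in (0:ℝ)..x, φ p.1 s * φ p.2 (x - s)‖
            ≤ (∑ p ∈ Finset.HasAntidiagonal.antidiagonal n, M p.1 * M p.2)
              * (x ^ (n+1) / ((n+1).factorial : ℝ)) * Real.exp (L * x) := by
          refine (norm_sum_le _ _).trans ?_
          rw [Finset.sum_mul, Finset.sum_mul]
          exact Finset.sum_le_sum fun p hp => ihconv x hx0 p hp
        have hwφ : ‖w x * φ (n+1) x‖
            ≤ C * (M (n+1) * (x ^ (n+1) / ((n+1).factorial : ℝ)) * Real.exp (L * x)) := by
          rw [norm_mul]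
          refine mul_le_mul (hwb x hx0) (ih (n+1) (by omega) x hx0) (norm_nonneg _) hC0
        have hMk2 : M (n+2) = (∑ p ∈ Finset.HasAntidiagonal.antidiagonal n, M p.1 * M p.2) + C * M (n+1) := by
          have := hMk (n+2) (by omega)
          rwa [h2, h1] at this
        have hexp : Real.exp (L * x) ≤ Real.exp (L * τ) :=
          Real.exp_le_exp.2 (mul_le_mul_of_nonneg_left hx.2 hL)
        have hM2 := hMpos (n+2)
        calc ‖(∑ p ∈ Finset.HasAntidiagonal.antidiagonal n,
              ∫ s in (0:ℝ)..x, φ p.1 s * φ p.2 (x - s)) + w x * φ (n+1) x‖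
            ≤ (∑ p ∈ Finset.HasAntidiagonal.antidiagonal n, M p.1 * M p.2)
                * (x ^ (n+1) / ((n+1).factorial : ℝ)) * Real.exp (L * x)
              + C * (M (n+1) * (x ^ (n+1) / ((n+1).factorial : ℝ)) * Real.exp (L * x)) :=
            (norm_add_le _ _).trans (add_le_add hsum hwφ)
          _ = M (n+2) * (x ^ (n+1) / ((n+1).factorial : ℝ)) * Real.exp (L * x) := by
              rw [hMk2]; ring
          _ ≤ K * x ^ (n+1) := by
              rw [hK]
              have hxp : (0:ℝ) ≤ x ^ (n+1) / ((n+1).factorial : ℝ) := by positivity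
              have : M (n+2) * (x ^ (n+1) / ((n+1).factorial : ℝ)) * Real.exp (L * x)
                  ≤ M (n+2) * (x ^ (n+1) / ((n+1).factorial : ℝ)) * Real.exp (L * τ) := by
                apply mul_le_mul_of_nonneg_left hexp (by positivity)
              calc M (n+2) * (x ^ (n+1) / ((n+1).factorial : ℝ)) * Real.exp (L * x)
                  ≤ M (n+2) * (x ^ (n+1) / ((n+1).factorial : ℝ)) * Real.exp (L * τ) := this
                _ = M (n+2) / ((n+1).factorial : ℝ) * Real.exp (L * τ) * x ^ (n+1) := by ring
      rw [hφk (n+2) (by omega) τ, h2, h1]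
      have hae2 : ∀ᵐ t ∂(volume.restrict (Set.uIoc (0:ℝ) τ)),
          ‖(∑ p ∈ Finset.HasAntidiagonal.antidiagonal n,
              ∫ s in (0:ℝ)..t, φ p.1 s * φ p.2 (t - s)) + w t * φ (n+1) t‖
            ≤ K * t ^ (n+1) := by
        refine ae_restrict_of_forall_mem measurableSet_uIoc fun t ht => ?_
        rw [Set.uIoc_of_le hτ] at ht
        exact hout t ht
      have hGint : IntervalIntegrable (fun t => K * t ^ (n+1)) volume 0 τ :=
        (continuous_const.mul (continuous_pow _)).intervalIntegrable 0 τ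
      have key := intervalIntegral.norm_integral_le_abs_of_norm_le hae2 hGint
      have hGval : (∫ t in (0:ℝ)..τ, K * t ^ (n+1)) = K * (τ ^ (n+2) / (n+2)) := by
        rw [intervalIntegral.integral_const_mul, integral_pow, zero_pow (by omega : n+1+1 ≠ 0), sub_zero]
        push_cast
        ring_nf
      rw [hGval] at key
      have hK0 : 0 ≤ K := by
        rw [hK]
        have := hMpos (n+2)
        positivity
      rw [abs_of_nonneg (by positivity)] at key
      refine key.trans (le_of_eq ?_)
      rw [hK]
      have hfs : ((n+2).factorial : ℝ) = (n+2) * ((n+1).factorial : ℝ) := by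
        rw [Nat.factorial_succ]; push_cast; ring
      rw [hfs]
      field_simp
end

section
/- Consider the recursive Volterra system: fix real constants C ≥ 1 and L ≥ 0, a constant c ∈ ℂ with ‖c‖ ≤ C, and continuous functions w, ω : [0,∞) → ℂ with ‖w(τ)‖ ≤ C and ‖ω(τ)‖ ≤ C·e^{L·τ} for all τ ≥ 0; define continuous functions φ_k : [0,∞) → ℂ by φ_0(τ) = c, φ_1(τ) = ∫_0^τ (w(r)·φ_0(r) + ω(r)) dr, and for k ≥ 2, φ_k(τ) = ∫_0^τ (Σ_{i+j=k−2} (φ_i ∗ φ_j)(r) + w(r)·φ_{k−1}(r)) dr. Then there exist real constants C', M, K > 0 (depending only on C and L) such that ‖φ_k(τ)‖ ≤ C'·M^k·(τ^k/k!)·e^{L·τ} for all k ≥ 0 and τ ≥ 0; consequently, for every τ ≥ 0 the series Σ_{k=0}^∞ φ_k(τ) converges absolutely and ‖Σ_{k=0}^∞ φ_k(τ)‖ ≤ C'·e^{K·τ}. -/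
open intervalIntegral MeasureTheory

/-- Partial sums of the Basel series are at most 2. -/
private lemma vseb_basel (N : ℕ) : ∑ i ∈ Finset.range N, (1:ℝ) / ((i:ℝ) + 1) ^ 2 ≤ 2 := by
  have h : ∀ N : ℕ, ∑ i ∈ Finset.range N, (1:ℝ) / ((i:ℝ) + 1) ^ 2 ≤ 2 - 2 / ((N:ℝ) + 1) := by
    intro N
    induction N with
    | zero => norm_num
    | succ N ihN =>
      rw [Finset.sum_range_succ]
      have hN : (0:ℝ) < (N:ℝ) + 1 := by positivity
      have hN2 : (0:ℝ) < (N:ℝ) + 2 := by positivity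
      have key : (1:ℝ) / ((N:ℝ) + 1) ^ 2 ≤ 2 / ((N:ℝ) + 1) - 2 / ((N:ℝ) + 2) := by
        rw [div_sub_div _ _ (ne_of_gt hN) (ne_of_gt hN2), div_le_div_iff₀ (by positivity) (by positivity)]
        nlinarith
      push_cast
      have e : ((N:ℝ) + 1 + 1) = ((N:ℝ) + 2) := by ring
      rw [e]
      linarith [ihN]
  have := h N
  have hN : (0:ℝ) < 2 / ((N:ℝ) + 1) := by positivity
  linarith

/-- Weighted antidiagonal sum bound. -/
private lemma vseb_weight (n : ℕ) :
    ∑ p ∈ Finset.HasAntidiagonal.antidiagonal n, (1:ℝ) / ((p.1:ℝ) + 1) ^ 2 * (1 / ((p.2:ℝ) + 1) ^ 2)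
      ≤ 16 / ((n:ℝ) + 2) ^ 2 := by
  have hterm : ∀ p ∈ Finset.HasAntidiagonal.antidiagonal n,
      (1:ℝ) / ((p.1:ℝ) + 1) ^ 2 * (1 / ((p.2:ℝ) + 1) ^ 2)
        ≤ 4 / ((n:ℝ) + 2) ^ 2 * (1 / ((p.1:ℝ) + 1) ^ 2 + 1 / ((p.2:ℝ) + 1) ^ 2) := by
    intro p hp
    rw [Finset.HasAntidiagonal.mem_antidiagonal] at hp
    set a : ℝ := (p.1:ℝ) + 1 with ha
    set b : ℝ := (p.2:ℝ) + 1 with hb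
    have ha1 : (1:ℝ) ≤ a := by simp [ha]
    have hb1 : (1:ℝ) ≤ b := by simp [hb]
    have hab : a + b = (n:ℝ) + 2 := by
      rw [ha, hb, ← hp]; push_cast; ring
    have ha0 : (0:ℝ) < a := by linarith
    have hb0 : (0:ℝ) < b := by linarith
    rw [← hab]
    have hl : (1:ℝ) / a ^ 2 * (1 / b ^ 2) = 1 / (a ^ 2 * b ^ 2) := by
      rw [div_mul_div_comm, one_mul]
    have hr : 4 / (a + b) ^ 2 * (1 / a ^ 2 + 1 / b ^ 2)
        = 4 * (a ^ 2 + b ^ 2) / ((a + b) ^ 2 * (a ^ 2 * b ^ 2)) := by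
      field_simp
      ring
    rw [hl, hr, div_le_div_iff₀ (by positivity) (by positivity)]
    have hsq : (a + b) ^ 2 ≤ 4 * (a ^ 2 + b ^ 2) := by nlinarith [sq_nonneg (a - b)]
    have := mul_le_mul_of_nonneg_right hsq (show (0:ℝ) ≤ a ^ 2 * b ^ 2 by positivity)
    nlinarith [this]
  calc ∑ p ∈ Finset.HasAntidiagonal.antidiagonal n, (1:ℝ) / ((p.1:ℝ) + 1) ^ 2 * (1 / ((p.2:ℝ) + 1) ^ 2)
      ≤ ∑ p ∈ Finset.HasAntidiagonal.antidiagonal n,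
          4 / ((n:ℝ) + 2) ^ 2 * (1 / ((p.1:ℝ) + 1) ^ 2 + 1 / ((p.2:ℝ) + 1) ^ 2) :=
        Finset.sum_le_sum hterm
    _ = 4 / ((n:ℝ) + 2) ^ 2 * (∑ p ∈ Finset.HasAntidiagonal.antidiagonal n, (1:ℝ) / ((p.1:ℝ) + 1) ^ 2
          + ∑ p ∈ Finset.HasAntidiagonal.antidiagonal n, (1:ℝ) / ((p.2:ℝ) + 1) ^ 2) := by
        rw [← Finset.sum_add_distrib, Finset.mul_sum]
    _ ≤ 4 / ((n:ℝ) + 2) ^ 2 * (2 + 2) := by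
        have h1 : ∑ p ∈ Finset.HasAntidiagonal.antidiagonal n, (1:ℝ) / ((p.1:ℝ) + 1) ^ 2 ≤ 2 := by
          rw [Finset.Nat.sum_antidiagonal_eq_sum_range_succ_mk]
          exact vseb_basel (n + 1)
        have h2 : ∑ p ∈ Finset.HasAntidiagonal.antidiagonal n, (1:ℝ) / ((p.2:ℝ) + 1) ^ 2 ≤ 2 := by
          rw [Finset.Nat.sum_antidiagonal_eq_sum_range_succ_mk]
          calc ∑ i ∈ Finset.range (n+1), (1:ℝ) / (((n - i : ℕ):ℝ) + 1) ^ 2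
              = ∑ i ∈ Finset.range (n+1), (1:ℝ) / ((i:ℝ) + 1) ^ 2 := by
                rw [← Finset.sum_range_reflect (fun i => (1:ℝ) / ((i:ℝ) + 1) ^ 2) (n+1)]
                simp only [Nat.add_sub_cancel]
            _ ≤ 2 := vseb_basel (n + 1)
        gcongr
    _ = 16 / ((n:ℝ) + 2) ^ 2 := by ring

/-- Beta integral with natural exponents. -/
private lemma vseb_beta : ∀ (j i : ℕ) (x : ℝ),
    ∫ s in (0:ℝ)..x, s ^ i * (x - s) ^ j
      = ((i.factorial : ℝ) * (j.factorial : ℝ) / ((i + j + 1).factorial : ℝ)) * x ^ (i + j + 1) := by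
  intro j
  induction j with
  | zero =>
    intro i x
    simp only [pow_zero, mul_one, Nat.factorial_zero, Nat.cast_one, Nat.add_zero]
    rw [integral_pow]
    rw [Nat.factorial_succ]
    push_cast
    have : ((i:ℝ) + 1) ≠ 0 := by positivity
    field_simp
    ring
  | succ j ih =>
    intro i x
    have hu : ∀ s ∈ Set.uIcc (0:ℝ) x,
        HasDerivAt (fun s : ℝ => (x - s) ^ (j+1)) (-(((j:ℝ)+1) * (x - s) ^ j)) s := by
      intro s _
      have h1 : HasDerivAt (fun s : ℝ => x - s) (-1) s := (hasDerivAt_id s).const_sub x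
      have := h1.pow (j+1)
      refine this.congr_deriv ?_
      simp only [Nat.add_sub_cancel]
      push_cast
      ring
    have hv : ∀ s ∈ Set.uIcc (0:ℝ) x,
        HasDerivAt (fun s : ℝ => s ^ (i+1) / ((i:ℝ) + 1)) (s ^ i) s := by
      intro s _
      have := (hasDerivAt_pow (i+1) s).div_const ((i:ℝ) + 1)
      refine this.congr_deriv ?_
      have : ((i:ℝ) + 1) ≠ 0 := by positivity
      simp only [Nat.add_sub_cancel]
      push_cast
      field_simp
    have hIBP := intervalIntegral.integral_mul_deriv_eq_deriv_mul hu hv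
      (Continuous.intervalIntegrable (by fun_prop) 0 x)
      (Continuous.intervalIntegrable (by fun_prop) 0 x)
    have hcomm : ∫ s in (0:ℝ)..x, s ^ i * (x - s) ^ (j+1)
        = ∫ s in (0:ℝ)..x, (x - s) ^ (j+1) * s ^ i :=
      intervalIntegral.integral_congr (fun s _ => mul_comm _ _)
    rw [hcomm, hIBP]
    have hrw : ∫ s in (0:ℝ)..x, -(((j:ℝ)+1) * (x - s) ^ j) * (s ^ (i+1) / ((i:ℝ) + 1))
        = (-(((j:ℝ)+1) / ((i:ℝ)+1))) * ∫ s in (0:ℝ)..x, s ^ (i+1) * (x - s) ^ j := by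
      rw [← intervalIntegral.integral_const_mul]
      refine intervalIntegral.integral_congr (fun s _ => ?_)
      field_simp
    rw [hrw, ih (i+1) x]
    have h1 : i + 1 + j + 1 = i + (j + 1) + 1 := by ring
    rw [h1]
    have hfi : (((i+1).factorial : ℝ)) = ((i:ℝ)+1) * (i.factorial : ℝ) := by
      rw [Nat.factorial_succ]; push_cast; ring
    have hfj : (((j+1).factorial : ℝ)) = ((j:ℝ)+1) * (j.factorial : ℝ) := by
      rw [Nat.factorial_succ]; push_cast; ring
    rw [hfi, hfj]
    have hi0 : ((i:ℝ) + 1) ≠ 0 := by positivity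
    have hF : (((i + (j+1) + 1).factorial : ℝ)) ≠ 0 := by positivity
    simp only [sub_self]
    rw [zero_pow (by omega : j + 1 ≠ 0)]
    field_simp
    ring

/-- Bound on `∫ x^m e^{Lx}`. -/
private lemma vseb_expint (L : ℝ) (hL : 0 ≤ L) (m : ℕ) (τ : ℝ) (hτ : 0 ≤ τ) :
    ∫ x in (0:ℝ)..τ, x ^ m * Real.exp (L * x)
      ≤ Real.exp (L * τ) * τ ^ (m+1) / ((m:ℝ) + 1) := by
  have hmono : ∫ x in (0:ℝ)..τ, x ^ m * Real.exp (L * x)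
      ≤ ∫ x in (0:ℝ)..τ, x ^ m * Real.exp (L * τ) := by
    apply intervalIntegral.integral_mono_on hτ
      (Continuous.intervalIntegrable (by fun_prop) 0 τ)
      (Continuous.intervalIntegrable (by fun_prop) 0 τ)
    intro x hx
    have hx0 : 0 ≤ x := hx.1
    have hxτ : x ≤ τ := hx.2
    have := Real.exp_le_exp.mpr (mul_le_mul_of_nonneg_left hxτ hL)
    have hxm : (0:ℝ) ≤ x ^ m := pow_nonneg hx0 m
    exact mul_le_mul_of_nonneg_left this hxm
  calc ∫ x in (0:ℝ)..τ, x ^ m * Real.exp (L * x)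
      ≤ ∫ x in (0:ℝ)..τ, x ^ m * Real.exp (L * τ) := hmono
    _ = Real.exp (L * τ) * τ ^ (m+1) / ((m:ℝ) + 1) := by
        rw [intervalIntegral.integral_mul_const, integral_pow]
        push_cast
        ring

set_option maxHeartbeats 1000000

/-- Exponential-type estimate for the successive approximations: the terms `φ_k` of
the recursive Volterra system satisfy geometric-factorial bounds
`‖φ_k(τ)‖ ≤ C'·M^k·(τ^k/k!)·e^{Lτ}`, and consequently the series `Σ_k φ_k(τ)`
converges absolutely with an exponential bound `C'·e^{Kτ}`. -/
theorem volterra_system_exponential_bound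
    (C L : ℝ) (hC : 1 ≤ C) (hL : 0 ≤ L)
    (c : ℂ) (hc : ‖c‖ ≤ C)
    (w ω : ℝ → ℂ)
    (hwc : ContinuousOn w (Set.Ici 0)) (hωc : ContinuousOn ω (Set.Ici 0))
    (hwb : ∀ τ : ℝ, 0 ≤ τ → ‖w τ‖ ≤ C)
    (hωb : ∀ τ : ℝ, 0 ≤ τ → ‖ω τ‖ ≤ C * Real.exp (L * τ))
    (φ : ℕ → ℝ → ℂ) (hφc : ∀ k, ContinuousOn (φ k) (Set.Ici 0))
    (hφ0 : ∀ τ : ℝ, φ 0 τ = c)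
    (hφ1 : ∀ τ : ℝ, φ 1 τ = ∫ x in (0 : ℝ)..τ, (w x * φ 0 x + ω x))
    (hφk : ∀ k, 2 ≤ k → ∀ τ : ℝ, φ k τ
      = ∫ x in (0 : ℝ)..τ,
          ((∑ p ∈ Finset.HasAntidiagonal.antidiagonal (k - 2),
              ∫ s in (0 : ℝ)..x, φ p.1 s * φ p.2 (x - s))
            + w x * φ (k - 1) x)) :
    ∃ C' M K : ℝ, 0 < C' ∧ 0 < M ∧ 0 < K ∧
      (∀ k : ℕ, ∀ τ : ℝ, 0 ≤ τ →
        ‖φ k τ‖ ≤ C' * M ^ k * (τ ^ k / (Nat.factorial k : ℝ)) * Real.exp (L * τ)) ∧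
      ∀ τ : ℝ, 0 ≤ τ →
        Summable (fun k => ‖φ k τ‖) ∧ ‖∑' k, φ k τ‖ ≤ C' * Real.exp (K * τ) := by
  have hC0 : (0:ℝ) < C := by linarith
  set M : ℝ := 16 * C with hMdef
  have hM0 : (0:ℝ) < M := by rw [hMdef]; linarith
  -- the key geometric-factorial bound, with an extra `1/(k+1)^2` decay
  have key : ∀ k : ℕ, ∀ τ : ℝ, 0 ≤ τ →
      ‖φ k τ‖ ≤ C * M ^ k / ((k:ℝ) + 1) ^ 2 * (τ ^ k / (k.factorial : ℝ)) * Real.exp (L * τ) := by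
    intro k
    induction k using Nat.strong_induction_on with
    | _ k ih =>
      match k, ih with
      | 0, _ =>
        intro τ hτ
        rw [hφ0]
        have he : (1:ℝ) ≤ Real.exp (L * τ) := Real.one_le_exp (by positivity)
        simp only [pow_zero, Nat.factorial_zero, Nat.cast_one, Nat.cast_zero]
        norm_num
        have hc' : ‖c‖ ≤ C := hc
        nlinarith [hc', he, hC0]
      | 1, _ =>
        intro τ hτ
        rw [hφ1 τ]
        have hbound : ‖∫ x in (0:ℝ)..τ, (w x * φ 0 x + ω x)‖
            ≤ |∫ x in (0:ℝ)..τ, 2 * C^2 * (x ^ 0 * Real.exp (L * x))| := by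
          apply intervalIntegral.norm_integral_le_abs_of_norm_le
          · refine (MeasureTheory.ae_restrict_mem measurableSet_uIoc).mono fun x hx => ?_
            rw [Set.uIoc_of_le hτ] at hx
            have hx0 : (0:ℝ) ≤ x := le_of_lt hx.1
            have he : (1:ℝ) ≤ Real.exp (L * x) := Real.one_le_exp (by positivity)
            have h1 : ‖w x * φ 0 x + ω x‖ ≤ ‖w x‖ * ‖φ 0 x‖ + ‖ω x‖ := by
              calc ‖w x * φ 0 x + ω x‖ ≤ ‖w x * φ 0 x‖ + ‖ω x‖ := norm_add_le _ _
                _ = ‖w x‖ * ‖φ 0 x‖ + ‖ω x‖ := by rw [norm_mul]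
            have hw := hwb x hx0
            have hφ0x : ‖φ 0 x‖ ≤ C := by rw [hφ0]; exact hc
            have hω := hωb x hx0
            simp only [pow_zero, one_mul]
            nlinarith [norm_nonneg (w x), norm_nonneg (φ 0 x), norm_nonneg (ω x),
              Real.exp_pos (L * x)]
          · exact Continuous.intervalIntegrable (by fun_prop) 0 τ
        have hInt : ∫ x in (0:ℝ)..τ, 2 * C^2 * (x ^ 0 * Real.exp (L * x))
            = 2 * C^2 * ∫ x in (0:ℝ)..τ, x ^ 0 * Real.exp (L * x) :=
          intervalIntegral.integral_const_mul _ _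
        have hIpos : 0 ≤ ∫ x in (0:ℝ)..τ, x ^ 0 * Real.exp (L * x) :=
          intervalIntegral.integral_nonneg hτ (fun x hx => by positivity)
        have hIle := vseb_expint L hL 0 τ hτ
        have habs : |∫ x in (0:ℝ)..τ, 2 * C^2 * (x ^ 0 * Real.exp (L * x))|
            ≤ 2 * C^2 * (Real.exp (L * τ) * τ ^ 1 / ((0:ℝ) + 1)) := by
          rw [hInt, abs_of_nonneg (mul_nonneg (by positivity) hIpos)]
          apply mul_le_mul_of_nonneg_left _ (by positivity : (0:ℝ) ≤ 2 * C^2)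
          simpa using hIle
        refine hbound.trans (habs.trans ?_)
        have hE : (0:ℝ) ≤ Real.exp (L * τ) := (Real.exp_pos _).le
        rw [hMdef]
        push_cast
        norm_num
        nlinarith [mul_nonneg hE hτ, hC0]
      | (n+2), ih =>
        intro τ hτ
        have hk2 := hφk (n+2) (by omega) τ
        rw [show n+2-2 = n from rfl, show n+2-1 = n+1 from rfl] at hk2
        have conv_bound : ∀ x : ℝ, 0 < x → ∀ p ∈ Finset.HasAntidiagonal.antidiagonal n,
            ‖∫ s in (0:ℝ)..x, φ p.1 s * φ p.2 (x - s)‖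
              ≤ (C * M ^ p.1 / ((p.1:ℝ) + 1) ^ 2) * (C * M ^ p.2 / ((p.2:ℝ) + 1) ^ 2)
                * Real.exp (L * x) * x ^ (n+1) / (((n+1).factorial : ℝ)) := by
          intro x hx0 p hp
          rw [Finset.HasAntidiagonal.mem_antidiagonal] at hp
          obtain ⟨i, j⟩ := p
          simp only at hp ⊢
          set K : ℝ := (C * M ^ i / ((i:ℝ) + 1) ^ 2) * (C * M ^ j / ((j:ℝ) + 1) ^ 2)
              * Real.exp (L * x) / ((i.factorial : ℝ) * (j.factorial : ℝ)) with hK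
          have hfi : ((i.factorial : ℝ)) ≠ 0 := by positivity
          have hfj : ((j.factorial : ℝ)) ≠ 0 := by positivity
          have hK0 : 0 ≤ K := by rw [hK]; positivity
          have step : ‖∫ s in (0:ℝ)..x, φ i s * φ j (x - s)‖
              ≤ |∫ s in (0:ℝ)..x, K * (s ^ i * (x - s) ^ j)| := by
            apply intervalIntegral.norm_integral_le_abs_of_norm_le
            · refine (MeasureTheory.ae_restrict_mem measurableSet_uIoc).mono fun s hs => ?_
              rw [Set.uIoc_of_le (le_of_lt hx0)] at hs
              have hs0 : (0:ℝ) ≤ s := le_of_lt hs.1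
              have hsx : s ≤ x := hs.2
              have hxs : (0:ℝ) ≤ x - s := by linarith
              have h1 := ih i (by omega) s hs0
              have h2 := ih j (by omega) (x - s) hxs
              have hb1 : 0 ≤ C * M ^ i / ((i:ℝ) + 1) ^ 2 * (s ^ i / (i.factorial:ℝ))
                  * Real.exp (L * s) :=
                mul_nonneg (mul_nonneg (by positivity)
                  (div_nonneg (pow_nonneg hs0 i) (by positivity))) (Real.exp_pos _).le
              calc ‖φ i s * φ j (x - s)‖ = ‖φ i s‖ * ‖φ j (x - s)‖ := norm_mul _ _
                _ ≤ (C * M ^ i / ((i:ℝ) + 1) ^ 2 * (s ^ i / (i.factorial:ℝ)) * Real.exp (L * s))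
                    * (C * M ^ j / ((j:ℝ) + 1) ^ 2 * ((x - s) ^ j / (j.factorial:ℝ))
                      * Real.exp (L * (x - s))) :=
                    mul_le_mul h1 h2 (norm_nonneg _) hb1
                _ = K * (s ^ i * (x - s) ^ j) := by
                    rw [hK, show L * x = L * s + L * (x - s) by ring, Real.exp_add]
                    ring
            · exact Continuous.intervalIntegrable (by fun_prop) 0 x
          have hIeq : ∫ s in (0:ℝ)..x, K * (s ^ i * (x - s) ^ j)
              = K * (((i.factorial:ℝ) * (j.factorial:ℝ) / (((i + j + 1).factorial : ℝ)))
                  * x ^ (i + j + 1)) := by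
            rw [intervalIntegral.integral_const_mul, vseb_beta]
          refine step.trans ?_
          rw [hIeq, abs_of_nonneg (mul_nonneg hK0 (mul_nonneg (by positivity)
            (pow_nonneg (le_of_lt hx0) _)))]
          rw [show i + j + 1 = n + 1 by omega, hK]
          have hfn : (((n+1).factorial : ℝ)) ≠ 0 := by positivity
          have gen : ∀ (a X fi fj F : ℝ), fi ≠ 0 → fj ≠ 0 → F ≠ 0 →
              a / (fi * fj) * (fi * fj / F * X) = a * X / F := by
            intros a X fi fj F h1 h2 h3
            field_simp
          exact le_of_eq (gen _ _ _ _ _ hfi hfj hfn)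
        set D : ℝ := C^2 * M^n * (16 + M) / (((n:ℝ)+2)^2) / (((n+1).factorial : ℝ)) with hD
        have houter : ‖φ (n+2) τ‖ ≤ |∫ x in (0:ℝ)..τ, D * (x ^ (n+1) * Real.exp (L * x))| := by
          rw [hk2]
          apply intervalIntegral.norm_integral_le_abs_of_norm_le
          · refine (MeasureTheory.ae_restrict_mem measurableSet_uIoc).mono fun x hx => ?_
            rw [Set.uIoc_of_le hτ] at hx
            obtain ⟨hx0, hxτ⟩ := hx
            have hE : (0:ℝ) < Real.exp (L * x) := Real.exp_pos _
            have hxp : (0:ℝ) ≤ x ^ (n+1) := pow_nonneg hx0.le _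
            have h1 : ‖∑ p ∈ Finset.HasAntidiagonal.antidiagonal n, ∫ s in (0:ℝ)..x, φ p.1 s * φ p.2 (x - s)‖
                ≤ ∑ p ∈ Finset.HasAntidiagonal.antidiagonal n,
                    ((C * M ^ p.1 / ((p.1:ℝ) + 1) ^ 2) * (C * M ^ p.2 / ((p.2:ℝ) + 1) ^ 2)
                      * Real.exp (L * x) * x ^ (n+1) / (((n+1).factorial : ℝ))) :=
              (norm_sum_le _ _).trans (Finset.sum_le_sum fun p hp => conv_bound x hx0 p hp)
            have h2 : ∑ p ∈ Finset.HasAntidiagonal.antidiagonal n,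
                    ((C * M ^ p.1 / ((p.1:ℝ) + 1) ^ 2) * (C * M ^ p.2 / ((p.2:ℝ) + 1) ^ 2)
                      * Real.exp (L * x) * x ^ (n+1) / (((n+1).factorial : ℝ)))
                = (C^2 * M^n * Real.exp (L * x) * x ^ (n+1) / (((n+1).factorial : ℝ)))
                  * ∑ p ∈ Finset.HasAntidiagonal.antidiagonal n,
                      (1:ℝ) / ((p.1:ℝ) + 1) ^ 2 * (1 / ((p.2:ℝ) + 1) ^ 2) := by
              rw [Finset.mul_sum]
              refine Finset.sum_congr rfl fun p hp => ?_
              rw [Finset.HasAntidiagonal.mem_antidiagonal] at hp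
              rw [← hp, pow_add]
              ring
            have hc0 : (0:ℝ) ≤ C^2 * M^n * Real.exp (L * x) * x ^ (n+1) / (((n+1).factorial : ℝ)) :=
              div_nonneg (mul_nonneg (by positivity) hxp) (by positivity)
            have h3 : (C^2 * M^n * Real.exp (L * x) * x ^ (n+1) / (((n+1).factorial : ℝ)))
                  * ∑ p ∈ Finset.HasAntidiagonal.antidiagonal n,
                      (1:ℝ) / ((p.1:ℝ) + 1) ^ 2 * (1 / ((p.2:ℝ) + 1) ^ 2)
                ≤ (C^2 * M^n * Real.exp (L * x) * x ^ (n+1) / (((n+1).factorial : ℝ)))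
                  * (16 / ((n:ℝ) + 2) ^ 2) :=
              mul_le_mul_of_nonneg_left (vseb_weight n) hc0
            have h4 : ‖w x * φ (n+1) x‖ ≤ C^2 * M^(n+1) / (((n:ℝ)+2) ^ 2)
                * (x ^ (n+1) / (((n+1).factorial : ℝ))) * Real.exp (L * x) := by
              have hw := hwb x hx0.le
              have hφn := ih (n+1) (by omega) x hx0.le
              have hb1 : 0 ≤ C * M ^ (n+1) / (((n+1:ℕ):ℝ) + 1) ^ 2
                  * (x ^ (n+1) / (((n+1).factorial:ℝ))) * Real.exp (L * x) :=
                mul_nonneg (mul_nonneg (by positivity)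
                  (div_nonneg hxp (by positivity))) (Real.exp_pos _).le
              calc ‖w x * φ (n+1) x‖ = ‖w x‖ * ‖φ (n+1) x‖ := norm_mul _ _
                _ ≤ C * (C * M ^ (n+1) / (((n+1:ℕ):ℝ) + 1) ^ 2
                    * (x ^ (n+1) / (((n+1).factorial:ℝ))) * Real.exp (L * x)) :=
                    mul_le_mul hw hφn (norm_nonneg _) hC0.le
                _ = C^2 * M^(n+1) / (((n:ℝ)+2) ^ 2) * (x ^ (n+1) / (((n+1).factorial : ℝ)))
                    * Real.exp (L * x) := by
                    push_cast
                    ring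
            calc ‖(∑ p ∈ Finset.HasAntidiagonal.antidiagonal n, ∫ s in (0:ℝ)..x, φ p.1 s * φ p.2 (x - s))
                  + w x * φ (n+1) x‖
                ≤ ‖∑ p ∈ Finset.HasAntidiagonal.antidiagonal n, ∫ s in (0:ℝ)..x, φ p.1 s * φ p.2 (x - s)‖
                  + ‖w x * φ (n+1) x‖ := norm_add_le _ _
              _ ≤ (C^2 * M^n * Real.exp (L * x) * x ^ (n+1) / (((n+1).factorial : ℝ)))
                    * (16 / ((n:ℝ) + 2) ^ 2)
                  + C^2 * M^(n+1) / (((n:ℝ)+2) ^ 2) * (x ^ (n+1) / (((n+1).factorial : ℝ)))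
                    * Real.exp (L * x) := by
                  have h12 := h1.trans (le_of_eq h2)
                  linarith [h12.trans h3, h4]
              _ = D * (x ^ (n+1) * Real.exp (L * x)) := by rw [hD]; ring
          · exact Continuous.intervalIntegrable (by fun_prop) 0 τ
        have hD0 : 0 ≤ D := by rw [hD]; positivity
        have hInt2 : ∫ x in (0:ℝ)..τ, D * (x ^ (n+1) * Real.exp (L * x))
            = D * ∫ x in (0:ℝ)..τ, x ^ (n+1) * Real.exp (L * x) :=
          intervalIntegral.integral_const_mul _ _
        have hIpos : 0 ≤ ∫ x in (0:ℝ)..τ, x ^ (n+1) * Real.exp (L * x) :=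
          intervalIntegral.integral_nonneg hτ
            (fun x hx => mul_nonneg (pow_nonneg hx.1 _) (Real.exp_pos _).le)
        have hIle := vseb_expint L hL (n+1) τ hτ
        have hT : (0:ℝ) ≤ τ ^ (n+2) := pow_nonneg hτ _
        have hE : (0:ℝ) ≤ Real.exp (L * τ) := (Real.exp_pos _).le
        have hF0 : (0:ℝ) < ((n+1).factorial : ℝ) := by positivity
        have hcast : (((n+2).factorial : ℝ)) = ((n:ℝ)+2) * (((n+1).factorial : ℝ)) := by
          rw [show n+2 = (n+1)+1 from rfl, Nat.factorial_succ]
          push_cast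
          try ring
        have hkey2 : C^2 * M^n * (16 + M) * ((n:ℝ)+3)^2 ≤ C * M^(n+2) * ((n:ℝ)+2)^2 := by
          have hkey : C^2 * (16 + M) * ((n:ℝ)+3)^2 ≤ C * M^2 * ((n:ℝ)+2)^2 := by
            rw [hMdef]
            have hν : (0:ℝ) ≤ (n:ℝ) := Nat.cast_nonneg n
            have h1 : ((n:ℝ)+3)^2 ≤ 4*((n:ℝ)+2)^2 := by nlinarith
            have h2 : C^2*(16+16*C) ≤ 32*C^3 := by nlinarith
            have h3 : C^2*(16+16*C) * ((n:ℝ)+3)^2 ≤ 32*C^3 * ((n:ℝ)+3)^2 :=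
              mul_le_mul_of_nonneg_right h2 (by positivity)
            have h4 : 32*C^3*((n:ℝ)+3)^2 ≤ 32*C^3*(4*((n:ℝ)+2)^2) :=
              mul_le_mul_of_nonneg_left h1 (by positivity)
            nlinarith [h3, h4]
          have hmn := mul_le_mul_of_nonneg_right hkey (pow_nonneg hM0.le n)
          calc C^2 * M^n * (16 + M) * ((n:ℝ)+3)^2
              = (C^2 * (16+M) * ((n:ℝ)+3)^2) * M^n := by ring
            _ ≤ (C * M^2 * ((n:ℝ)+2)^2) * M^n := hmn
            _ = C * M^(n+2) * ((n:ℝ)+2)^2 := by rw [pow_add]; ring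
        have hν2 : ((n:ℝ)+2) ≠ 0 := by positivity
        have hν3 : ((n:ℝ)+3) ≠ 0 := by positivity
        calc ‖φ (n+2) τ‖ ≤ |∫ x in (0:ℝ)..τ, D * (x ^ (n+1) * Real.exp (L * x))| := houter
          _ = D * ∫ x in (0:ℝ)..τ, x ^ (n+1) * Real.exp (L * x) := by
              rw [hInt2, abs_of_nonneg (mul_nonneg hD0 hIpos)]
          _ ≤ D * (Real.exp (L * τ) * τ ^ (n+2) / (((n+1:ℕ):ℝ) + 1)) :=
              mul_le_mul_of_nonneg_left hIle hD0
          _ ≤ C * M ^ (n+2) / (((n+2:ℕ):ℝ) + 1) ^ 2 * (τ ^ (n+2) / (((n+2).factorial:ℝ)))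
              * Real.exp (L * τ) := by
              rw [hD, hcast]
              push_cast
              rw [show (n:ℝ)+1+1 = (n:ℝ)+2 by ring, show (n:ℝ)+2+1 = (n:ℝ)+3 by ring]
              have eL : C^2 * M^n * (16 + M) / (((n:ℝ)+2)^2) / (((n+1).factorial : ℝ))
                    * (Real.exp (L*τ) * τ^(n+2) / ((n:ℝ)+2))
                  = (C^2 * M^n * (16+M) * (Real.exp (L*τ) * τ^(n+2)))
                    / (((n:ℝ)+2)^2 * (((n+1).factorial:ℝ)) * ((n:ℝ)+2)) := by
                field_simp
                try ring
              have eR : C * M^(n+2) / (((n:ℝ)+3)^2) * (τ^(n+2) / (((n:ℝ)+2) * (((n+1).factorial:ℝ))))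
                    * Real.exp (L*τ)
                  = (C * M^(n+2) * (Real.exp (L*τ) * τ^(n+2)))
                    / (((n:ℝ)+3)^2 * (((n:ℝ)+2) * (((n+1).factorial:ℝ)))) := by
                field_simp
                try ring
              rw [eL, eR, div_le_div_iff₀ (by positivity) (by positivity)]
              have hprod : (0:ℝ) ≤ Real.exp (L*τ) * τ^(n+2) * (((n+1).factorial:ℝ)) * ((n:ℝ)+2) :=
                mul_nonneg (mul_nonneg (mul_nonneg hE hT) hF0.le)
                  (by positivity : (0:ℝ) ≤ (n:ℝ)+2)
              calc C^2 * M^n * (16+M) * (Real.exp (L*τ) * τ^(n+2))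
                    * (((n:ℝ)+3)^2 * (((n:ℝ)+2) * (((n+1).factorial:ℝ))))
                  = (C^2 * M^n * (16 + M) * ((n:ℝ)+3)^2)
                    * (Real.exp (L*τ) * τ^(n+2) * (((n+1).factorial:ℝ)) * ((n:ℝ)+2)) := by ring
                _ ≤ (C * M^(n+2) * ((n:ℝ)+2)^2)
                    * (Real.exp (L*τ) * τ^(n+2) * (((n+1).factorial:ℝ)) * ((n:ℝ)+2)) :=
                    mul_le_mul_of_nonneg_right hkey2 hprod
                _ = C * M^(n+2) * (Real.exp (L*τ) * τ^(n+2))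
                    * (((n:ℝ)+2)^2 * (((n+1).factorial:ℝ)) * ((n:ℝ)+2)) := by ring

  refine ⟨C, M, L + M, hC0, hM0, by linarith, ?_, ?_⟩
  · intro k τ hτ
    have hk := key k τ hτ
    have h1 : C * M ^ k / ((k:ℝ) + 1) ^ 2 ≤ C * M ^ k := by
      apply div_le_self (by positivity)
      nlinarith [(Nat.cast_nonneg k : (0:ℝ) ≤ (k:ℝ))]
    have hA : (0:ℝ) ≤ τ ^ k / (k.factorial : ℝ) :=
      div_nonneg (pow_nonneg hτ k) (by positivity)
    have hE : (0:ℝ) ≤ Real.exp (L * τ) := (Real.exp_pos _).le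
    calc ‖φ k τ‖ ≤ C * M ^ k / ((k:ℝ) + 1) ^ 2 * (τ ^ k / (k.factorial : ℝ)) * Real.exp (L * τ) := hk
      _ ≤ C * M ^ k * (τ ^ k / (k.factorial : ℝ)) * Real.exp (L * τ) :=
          mul_le_mul_of_nonneg_right (mul_le_mul_of_nonneg_right h1 hA) hE
  · intro τ hτ
    have hE : (0:ℝ) ≤ Real.exp (L * τ) := (Real.exp_pos _).le
    have hb : ∀ k : ℕ, ‖φ k τ‖ ≤ (C * Real.exp (L * τ)) * ((M * τ) ^ k / (k.factorial : ℝ)) := by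
      intro k
      have hk := key k τ hτ
      have h1 : C * M ^ k / ((k:ℝ) + 1) ^ 2 ≤ C * M ^ k := by
        apply div_le_self (by positivity)
        nlinarith [(Nat.cast_nonneg k : (0:ℝ) ≤ (k:ℝ))]
      have hA : (0:ℝ) ≤ τ ^ k / (k.factorial : ℝ) :=
        div_nonneg (pow_nonneg hτ k) (by positivity)
      calc ‖φ k τ‖ ≤ C * M ^ k / ((k:ℝ) + 1) ^ 2 * (τ ^ k / (k.factorial : ℝ)) * Real.exp (L * τ) := hk
        _ ≤ C * M ^ k * (τ ^ k / (k.factorial : ℝ)) * Real.exp (L * τ) :=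
            mul_le_mul_of_nonneg_right (mul_le_mul_of_nonneg_right h1 hA) hE
        _ = (C * Real.exp (L * τ)) * ((M * τ) ^ k / (k.factorial : ℝ)) := by
            rw [mul_pow]; ring
    have hsum_aux : Summable (fun k : ℕ => (C * Real.exp (L * τ)) * ((M * τ) ^ k / (k.factorial : ℝ))) :=
      (Real.summable_pow_div_factorial (M * τ)).mul_left _
    have hsumm : Summable fun k => ‖φ k τ‖ :=
      Summable.of_nonneg_of_le (fun k => norm_nonneg _) hb hsum_aux
    refine ⟨hsumm, ?_⟩
    have ht1 : ‖∑' k, φ k τ‖ ≤ ∑' k, ‖φ k τ‖ := norm_tsum_le_tsum_norm hsumm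
    have ht2 : ∑' k, ‖φ k τ‖ ≤ ∑' k : ℕ, (C * Real.exp (L * τ)) * ((M * τ) ^ k / (k.factorial : ℝ)) :=
      Summable.tsum_le_tsum hb hsumm hsum_aux
    have ht3 : ∑' k : ℕ, (C * Real.exp (L * τ)) * ((M * τ) ^ k / (k.factorial : ℝ))
        = C * Real.exp ((L + M) * τ) := by
      rw [tsum_mul_left]
      have hexp : ∑' k : ℕ, ((M * τ) ^ k / (k.factorial : ℝ)) = Real.exp (M * τ) := by
        rw [Real.exp_eq_exp_ℝ, NormedSpace.exp_eq_tsum_div]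
      rw [hexp, mul_assoc, ← Real.exp_add]
      congr 2
      ring
    linarith
end

section
/- Consider the recursive Volterra system: fix real constants C ≥ 1 and L ≥ 0, a constant c ∈ ℂ with ‖c‖ ≤ C, and continuous functions w, ω : [0,∞) → ℂ with ‖w(τ)‖ ≤ C and ‖ω(τ)‖ ≤ C·e^{L·τ} for all τ ≥ 0; define continuous functions φ_k : [0,∞) → ℂ by φ_0(τ) = c, φ_1(τ) = ∫_0^τ (w(r)·φ_0(r) + ω(r)) dr, and for k ≥ 2, φ_k(τ) = ∫_0^τ (Σ_{i+j=k−2} (φ_i ∗ φ_j)(r) + w(r)·φ_{k−1}(r)) dr. Assume in addition that there exist constants C', M > 0 with ‖φ_k(τ)‖ ≤ C'·M^k·(τ^k/k!)·e^{L·τ} for all k ≥ 0 and τ ≥ 0. Then φ(τ) := Σ_{k=0}^∞ φ_k(τ) defines a continuous function φ : [0,∞) → ℂ which satisfies the nonlinear Volterra convolution equation φ(τ) = c + ∫_0^τ ((φ ∗ φ)(r) + w(r)·φ(r) + ω(r)) dr for all τ ≥ 0. -/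
open MeasureTheory Set

private lemma aux_choose_le_two_pow (n i : ℕ) : n.choose i ≤ 2 ^ n := by
  rcases le_or_gt i n with h | h
  · calc n.choose i ≤ ∑ j ∈ Finset.range (n + 1), n.choose j :=
        Finset.single_le_sum (fun j _ => Nat.zero_le _) (Finset.mem_range.2 (Nat.lt_succ_of_le h))
    _ = 2 ^ n := Nat.sum_range_choose n
  · simp [Nat.choose_eq_zero_of_lt h]

private lemma aux_inv_fact (i j : ℕ) :
    (1 : ℝ) / ((Nat.factorial i : ℝ) * (Nat.factorial j : ℝ))
      ≤ 2 ^ (i + j) / (Nat.factorial (i + j) : ℝ) := by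
  have hfact : (Nat.factorial (i + j)) ≤ 2 ^ (i + j) * (Nat.factorial i * Nat.factorial j) := by
    have h := Nat.choose_mul_factorial_mul_factorial (Nat.le_add_right i j)
    rw [Nat.add_sub_cancel_left] at h
    calc Nat.factorial (i + j) = (i + j).choose i * Nat.factorial i * Nat.factorial j := h.symm
      _ ≤ 2 ^ (i + j) * Nat.factorial i * Nat.factorial j := by
          exact Nat.mul_le_mul_right _ (Nat.mul_le_mul_right _ (aux_choose_le_two_pow _ _))
      _ = 2 ^ (i + j) * (Nat.factorial i * Nat.factorial j) := by ring
  rw [div_le_div_iff₀ (by positivity) (by positivity), one_mul]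
  exact_mod_cast hfact

/-- Interchange of a `tsum` and an interval integral, given uniform summable bounds. -/
private lemma aux_swap {g : ℕ → ℝ → ℂ} {τ : ℝ} (hτ : 0 ≤ τ)
    (hint : ∀ n, IntervalIntegrable (g n) volume 0 τ)
    {u : ℕ → ℝ} (hu : Summable u)
    (hb : ∀ n, ∀ x ∈ Set.Ioc (0:ℝ) τ, ‖g n x‖ ≤ u n) :
    ∑' n, ∫ x in (0:ℝ)..τ, g n x = ∫ x in (0:ℝ)..τ, ∑' n, g n x := by
  have hbound : ∀ n, ∫ x in Set.Ioc (0:ℝ) τ, ‖g n x‖ ≤ τ * u n := by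
    intro n
    have h1 : ∫ x in Set.Ioc (0:ℝ) τ, ‖g n x‖ ≤ ∫ _x in Set.Ioc (0:ℝ) τ, u n := by
      apply MeasureTheory.integral_mono_ae ((hint n).1.norm) (integrable_const _)
      filter_upwards [ae_restrict_mem measurableSet_Ioc] with x hx using hb n x hx
    simpa [Real.volume_Ioc, hτ, smul_eq_mul, ENNReal.toReal_ofReal] using h1
  have key := MeasureTheory.integral_tsum_of_summable_integral_norm
    (μ := volume.restrict (Set.Ioc (0:ℝ) τ)) (F := g) (fun n => (hint n).1)
    (Summable.of_nonneg_of_le (fun n => integral_nonneg fun x => norm_nonneg _)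
      hbound (hu.mul_left τ))
  simpa [intervalIntegral.integral_of_le hτ] using key

set_option maxHeartbeats 1000000 in
/-- The method of successive approximations solves the Borel-transformed Riccati
equation along a trajectory: if the terms `φ_k` of the recursive Volterra system
satisfy geometric-factorial bounds, then `Φ(τ) := Σ_k φ_k(τ)` is continuous on
`[0,∞)` and satisfies the nonlinear Volterra convolution equation
`Φ(τ) = c + ∫₀^τ ((Φ ∗ Φ)(r) + w(r)Φ(r) + ω(r)) dr`. -/
theorem volterra_system_sum_solves_equation
    (C L : ℝ) (hC : 1 ≤ C) (hL : 0 ≤ L)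
    (c : ℂ) (hc : ‖c‖ ≤ C)
    (w ω : ℝ → ℂ)
    (hwc : ContinuousOn w (Set.Ici 0)) (hωc : ContinuousOn ω (Set.Ici 0))
    (hwb : ∀ τ : ℝ, 0 ≤ τ → ‖w τ‖ ≤ C)
    (hωb : ∀ τ : ℝ, 0 ≤ τ → ‖ω τ‖ ≤ C * Real.exp (L * τ))
    (φ : ℕ → ℝ → ℂ) (hφc : ∀ k, ContinuousOn (φ k) (Set.Ici 0))
    (hφ0 : ∀ τ : ℝ, φ 0 τ = c)
    (hφ1 : ∀ τ : ℝ, φ 1 τ = ∫ x in (0 : ℝ)..τ, (w x * φ 0 x + ω x))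
    (hφk : ∀ k, 2 ≤ k → ∀ τ : ℝ, φ k τ
      = ∫ x in (0 : ℝ)..τ,
          ((∑ p ∈ Finset.HasAntidiagonal.antidiagonal (k - 2),
              ∫ s in (0 : ℝ)..x, φ p.1 s * φ p.2 (x - s))
            + w x * φ (k - 1) x))
    (C' M : ℝ) (hC' : 0 < C') (hM : 0 < M)
    (hbound : ∀ k : ℕ, ∀ τ : ℝ, 0 ≤ τ →
      ‖φ k τ‖ ≤ C' * M ^ k * (τ ^ k / (Nat.factorial k : ℝ)) * Real.exp (L * τ))
    (Φ : ℝ → ℂ) (hΦ : ∀ τ : ℝ, Φ τ = ∑' k, φ k τ) :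
    ContinuousOn Φ (Set.Ici 0) ∧
      ∀ τ : ℝ, 0 ≤ τ →
        Φ τ = c + ∫ r in (0 : ℝ)..τ,
          ((∫ s in (0 : ℝ)..r, Φ s * Φ (r - s)) + w r * Φ r + ω r) := by
  -- comparison bound on compact intervals
  have hcomp : ∀ (T x : ℝ) (k : ℕ), 0 ≤ x → x ≤ T →
      ‖φ k x‖ ≤ C' * Real.exp (L * T) * ((M * T) ^ k / (Nat.factorial k : ℝ)) := by
    intro T x k hx hxT
    refine (hbound k x hx).trans ?_
    have h1 : C' * Real.exp (L * T) * ((M * T) ^ k / (Nat.factorial k : ℝ))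
        = C' * M ^ k * (T ^ k / (Nat.factorial k : ℝ)) * Real.exp (L * T) := by
      rw [mul_pow]; ring
    rw [h1]
    have h0T : (0:ℝ) ≤ T := hx.trans hxT
    have e1 : C' * M ^ k * (x ^ k / (Nat.factorial k : ℝ))
        ≤ C' * M ^ k * (T ^ k / (Nat.factorial k : ℝ)) := by
      apply mul_le_mul_of_nonneg_left _ (by positivity)
      gcongr
    exact mul_le_mul e1 (Real.exp_le_exp.2 (mul_le_mul_of_nonneg_left hxT hL))
      (Real.exp_pos _).le
      (mul_nonneg (by positivity) (div_nonneg (pow_nonneg h0T k) (Nat.cast_nonneg _)))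
  have husum : ∀ T : ℝ, Summable (fun k =>
      C' * Real.exp (L * T) * ((M * T) ^ k / (Nat.factorial k : ℝ))) := fun T =>
    (Real.summable_pow_div_factorial (M * T)).mul_left _
  have hnorm : ∀ x : ℝ, 0 ≤ x → Summable (fun k => ‖φ k x‖) := fun x hx =>
    Summable.of_nonneg_of_le (fun k => norm_nonneg _) (fun k => hcomp x x k hx le_rfl) (husum x)
  have hφsum : ∀ x : ℝ, 0 ≤ x → Summable (fun k => φ k x) := fun x hx => (hnorm x hx).of_norm
  -- continuity of Φ on [0,∞)
  have hcont : ContinuousOn Φ (Set.Ici 0) := by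
    intro τ hτ
    have hτ0 : (0:ℝ) ≤ τ := hτ
    have h1 : ContinuousOn (fun x => ∑' k, φ k x) (Set.Icc 0 (τ + 1)) := by
      refine continuousOn_tsum (fun k => (hφc k).mono Set.Icc_subset_Ici_self)
        (husum (τ + 1)) ?_
      intro k x hx
      exact hcomp (τ + 1) x k hx.1 hx.2
    have h2 : ContinuousOn Φ (Set.Icc 0 (τ + 1)) := h1.congr fun x _ => hΦ x
    exact (h2 τ ⟨hτ0, by linarith⟩).mono_of_mem_nhdsWithin
      (Filter.mem_of_superset
        (inter_mem_nhdsWithin (Set.Ici 0) (Iio_mem_nhds (lt_add_one τ)))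
        (fun x hx => ⟨hx.1, hx.2.le⟩))
  refine ⟨hcont, ?_⟩
  intro τ hτ
  -- continuity of convolution-type integrals
  have hgen : ∀ f g : ℝ → ℂ, ContinuousOn f (Set.Ici 0) → ContinuousOn g (Set.Ici 0) →
      ContinuousOn (fun x => ∫ s in (0:ℝ)..x, f s * g (x - s)) (Set.Ici 0) := by
    intro f g hf hg
    have hfc : Continuous fun s => f (max s 0) :=
      hf.comp_continuous (continuous_id.max continuous_const) fun x => Set.mem_Ici.2 (le_max_right _ _)
    have hgc : Continuous fun s => g (max s 0) :=
      hg.comp_continuous (continuous_id.max continuous_const) fun x => Set.mem_Ici.2 (le_max_right _ _)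
    have h1 : Continuous fun x => ∫ s in (0:ℝ)..x, f (max s 0) * g (max (x - s) 0) := by
      apply intervalIntegral.continuous_parametric_intervalIntegral_of_continuous
        (f := fun x s => f (max s 0) * g (max (x - s) 0)) ?_ continuous_id
      exact (hfc.comp continuous_snd).mul (hgc.comp (continuous_fst.sub continuous_snd))
    refine h1.continuousOn.congr ?_
    intro x hx
    apply intervalIntegral.integral_congr
    intro s hs
    rw [Set.uIcc_of_le (hx : (0:ℝ) ≤ x)] at hs
    simp only [max_eq_left hs.1, max_eq_left (by linarith [hs.2] : (0:ℝ) ≤ x - s)]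
  -- term-by-term pointwise bound on the convolution products
  have hterm : ∀ (n : ℕ) (p : ℕ × ℕ), p ∈ Finset.HasAntidiagonal.antidiagonal n → ∀ r s : ℝ, 0 ≤ s → s ≤ r →
      ‖φ p.1 s * φ p.2 (r - s)‖
        ≤ C' ^ 2 * ((2 * M * r) ^ n / (Nat.factorial n : ℝ)) * Real.exp (L * r) := by
    rintro n ⟨i, j⟩ hp r s hs hsr
    have hij : i + j = n := Finset.HasAntidiagonal.mem_antidiagonal.1 hp
    subst hij
    have h0r : 0 ≤ r := hs.trans hsr
    have h1 := hbound i s hs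
    have h2 := hbound j (r - s) (by linarith)
    have hexp : Real.exp (L * s) * Real.exp (L * (r - s)) = Real.exp (L * r) := by
      rw [← Real.exp_add]; congr 1; ring
    rw [norm_mul]
    calc ‖φ i s‖ * ‖φ j (r - s)‖
        ≤ (C' * M ^ i * (s ^ i / (Nat.factorial i : ℝ)) * Real.exp (L * s))
          * (C' * M ^ j * ((r - s) ^ j / (Nat.factorial j : ℝ)) * Real.exp (L * (r - s))) :=
          mul_le_mul h1 h2 (norm_nonneg _) (by positivity)
      _ = C' ^ 2 * M ^ (i + j) * (s ^ i * (r - s) ^ j)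
            * ((1:ℝ) / ((Nat.factorial i : ℝ) * (Nat.factorial j : ℝ))) * Real.exp (L * r) := by
          rw [← hexp, pow_add]; ring
      _ ≤ C' ^ 2 * M ^ (i + j) * r ^ (i + j)
            * ((2:ℝ) ^ (i + j) / (Nat.factorial (i + j) : ℝ)) * Real.exp (L * r) := by
          have hs1 : s ^ i * (r - s) ^ j ≤ r ^ (i + j) := by
            rw [pow_add]
            exact mul_le_mul (pow_le_pow_left₀ hs hsr i)
              (pow_le_pow_left₀ (by linarith) (by linarith) j)
              (pow_nonneg (by linarith) j) (pow_nonneg h0r i)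
          have hXn : 0 ≤ s ^ i * (r - s) ^ j :=
            mul_nonneg (pow_nonneg hs i) (pow_nonneg (by linarith) j)
          apply mul_le_mul_of_nonneg_right _ (Real.exp_pos _).le
          apply mul_le_mul (mul_le_mul_of_nonneg_left hs1 (by positivity))
            (aux_inv_fact i j) (by positivity)
          exact mul_nonneg (by positivity) (pow_nonneg h0r _)
      _ = C' ^ 2 * ((2 * M * r) ^ (i + j) / (Nat.factorial (i + j) : ℝ)) * Real.exp (L * r) := by
          rw [mul_pow, mul_pow]; ring
  -- bound on the antidiagonal sums
  have hsumb : ∀ (n : ℕ) (r s : ℝ), 0 ≤ s → s ≤ r →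
      ‖∑ p ∈ Finset.HasAntidiagonal.antidiagonal n, φ p.1 s * φ p.2 (r - s)‖
        ≤ C' ^ 2 * ((4 * M * r) ^ n / (Nat.factorial n : ℝ)) * Real.exp (L * r) := by
    intro n r s hs hsr
    have h0r : 0 ≤ r := hs.trans hsr
    have hcard : ((n : ℝ) + 1) ≤ 2 ^ n := by exact_mod_cast (Nat.lt_two_pow_self (n := n))
    calc ‖∑ p ∈ Finset.HasAntidiagonal.antidiagonal n, φ p.1 s * φ p.2 (r - s)‖
        ≤ ∑ p ∈ Finset.HasAntidiagonal.antidiagonal n, ‖φ p.1 s * φ p.2 (r - s)‖ := norm_sum_le _ _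
      _ ≤ ∑ _p ∈ Finset.HasAntidiagonal.antidiagonal n,
            C' ^ 2 * ((2 * M * r) ^ n / (Nat.factorial n : ℝ)) * Real.exp (L * r) :=
          Finset.sum_le_sum fun p hp => hterm n p hp r s hs hsr
      _ = ((n : ℝ) + 1) * (C' ^ 2 * ((2 * M * r) ^ n / (Nat.factorial n : ℝ))
            * Real.exp (L * r)) := by
          rw [Finset.sum_const, Finset.Nat.card_antidiagonal, nsmul_eq_mul]; push_cast; ring
      _ ≤ 2 ^ n * (C' ^ 2 * ((2 * M * r) ^ n / (Nat.factorial n : ℝ)) * Real.exp (L * r)) := by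
          gcongr
      _ = C' ^ 2 * ((4 * M * r) ^ n / (Nat.factorial n : ℝ)) * Real.exp (L * r) := by
          have h4 : (4 * M * r) ^ n = 2 ^ n * (2 * M * r) ^ n := by
            rw [← mul_pow]; congr 1; ring
          rw [h4]; ring
  have hu4 : ∀ r : ℝ, Summable (fun n =>
      C' ^ 2 * ((4 * M * r) ^ n / (Nat.factorial n : ℝ)) * Real.exp (L * r)) := fun r =>
    ((Real.summable_pow_div_factorial (4 * M * r)).mul_left (C' ^ 2)).mul_right _
  -- integrability of the antidiagonal sum integrand
  have hintg : ∀ (n : ℕ) (x : ℝ), 0 ≤ x →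
      IntervalIntegrable (fun s => ∑ p ∈ Finset.HasAntidiagonal.antidiagonal n, φ p.1 s * φ p.2 (x - s))
        volume 0 x := by
    intro n x hx
    apply ContinuousOn.intervalIntegrable
    rw [Set.uIcc_of_le hx]
    apply continuousOn_finset_sum
    intro p _
    refine ((hφc p.1).mono Set.Icc_subset_Ici_self).mul ?_
    refine (hφc p.2).comp ((continuous_const.sub continuous_id).continuousOn) ?_
    intro s hs
    simp only [Set.mem_Icc] at hs
    simp only [Set.mem_Ici]
    linarith [hs.2]
  have htermint : ∀ (i j : ℕ) (x : ℝ), 0 ≤ x →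
      IntervalIntegrable (fun s => φ i s * φ j (x - s)) volume 0 x := by
    intro i j x hx
    apply ContinuousOn.intervalIntegrable
    rw [Set.uIcc_of_le hx]
    refine ((hφc i).mono Set.Icc_subset_Ici_self).mul ?_
    refine (hφc j).comp ((continuous_const.sub continuous_id).continuousOn) ?_
    intro s hs
    simp only [Set.mem_Icc] at hs
    simp only [Set.mem_Ici]
    linarith [hs.2]
  -- Step D : Cauchy product under the integral
  have hD : ∀ x : ℝ, 0 ≤ x →
      (∫ s in (0:ℝ)..x, Φ s * Φ (x - s))
        = ∑' n, ∑ p ∈ Finset.HasAntidiagonal.antidiagonal n, ∫ s in (0:ℝ)..x, φ p.1 s * φ p.2 (x - s) := by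
    intro x hx
    have hpt : ∀ s, 0 ≤ s → s ≤ x → Φ s * Φ (x - s)
        = ∑' n, ∑ p ∈ Finset.HasAntidiagonal.antidiagonal n, φ p.1 s * φ p.2 (x - s) := by
      intro s hs hsx
      rw [hΦ s, hΦ (x - s)]
      exact tsum_mul_tsum_eq_tsum_sum_antidiagonal_of_summable_norm
        (hnorm s hs) (hnorm (x - s) (by linarith))
    have hswap := aux_swap (g := fun n s => ∑ p ∈ Finset.HasAntidiagonal.antidiagonal n, φ p.1 s * φ p.2 (x - s))
      hx (fun n => hintg n x hx) (hu4 x)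
      (fun n s hs => hsumb n x s hs.1.le hs.2)
    have hcongr : (∫ s in (0:ℝ)..x, Φ s * Φ (x - s))
        = ∫ s in (0:ℝ)..x, ∑' n, ∑ p ∈ Finset.HasAntidiagonal.antidiagonal n, φ p.1 s * φ p.2 (x - s) := by
      apply intervalIntegral.integral_congr
      intro s hs
      rw [Set.uIcc_of_le hx] at hs
      exact hpt s hs.1 hs.2
    rw [hcongr, ← hswap]
    refine tsum_congr fun n => ?_
    exact intervalIntegral.integral_finset_sum
      (f := fun (p : ℕ × ℕ) s => φ p.1 s * φ p.2 (x - s))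
      fun p _ => htermint p.1 p.2 x hx
  -- notation for the n-th recursion integrand
  set A : ℕ → ℝ → ℂ := fun n x =>
    ∑ p ∈ Finset.HasAntidiagonal.antidiagonal n, ∫ s in (0:ℝ)..x, φ p.1 s * φ p.2 (x - s) with hAdef
  have hAeq : ∀ (n : ℕ) (x : ℝ), 0 ≤ x →
      A n x = ∫ s in (0:ℝ)..x, ∑ p ∈ Finset.HasAntidiagonal.antidiagonal n, φ p.1 s * φ p.2 (x - s) := by
    intro n x hx
    simp only [hAdef]
    exact (intervalIntegral.integral_finset_sum
      (f := fun (p : ℕ × ℕ) s => φ p.1 s * φ p.2 (x - s))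
      fun p _ => htermint p.1 p.2 x hx).symm
  have hAbound : ∀ (n : ℕ) (x : ℝ), 0 ≤ x →
      ‖A n x‖ ≤ x * (C' ^ 2 * ((4 * M * x) ^ n / (Nat.factorial n : ℝ)) * Real.exp (L * x)) := by
    intro n x hx
    rw [hAeq n x hx]
    have := intervalIntegral.norm_integral_le_of_norm_le_const
      (C := C' ^ 2 * ((4 * M * x) ^ n / (Nat.factorial n : ℝ)) * Real.exp (L * x))
      (f := fun s => ∑ p ∈ Finset.HasAntidiagonal.antidiagonal n, φ p.1 s * φ p.2 (x - s))
      (a := 0) (b := x) ?_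
    · calc _ ≤ _ := this
        _ = x * (C' ^ 2 * ((4 * M * x) ^ n / (Nat.factorial n : ℝ)) * Real.exp (L * x)) := by
            rw [sub_zero, abs_of_nonneg hx]; ring
    · intro s hs
      rw [Set.uIoc_of_le hx] at hs
      exact hsumb n x s hs.1.le hs.2
  have hAcont : ∀ n, ContinuousOn (A n) (Set.Ici 0) := by
    intro n
    simp only [hAdef]
    exact continuousOn_finset_sum _ fun p _ => hgen (φ p.1) (φ p.2) (hφc p.1) (hφc p.2)
  have hAsum : ∀ x : ℝ, 0 ≤ x → Summable fun n => A n x := by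
    intro x hx
    apply Summable.of_norm
    exact Summable.of_nonneg_of_le (fun n => norm_nonneg _) (fun n => hAbound n x hx)
      ((hu4 x).mul_left x)
  -- the series of tails
  have htail : ∀ x : ℝ, 0 ≤ x → ∑' n, φ (n + 1) x = Φ x - c := by
    intro x hx
    have h := Summable.tsum_eq_zero_add (hφsum x hx)
    rw [hφ0 x] at h
    rw [hΦ x, h]; ring
  have htailsum : ∀ x : ℝ, 0 ≤ x → Summable fun n => φ (n + 1) x := fun x hx =>
    (summable_nat_add_iff 1).2 (hφsum x hx)
  -- the grand decomposition of Φ τ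
  have hg_eq : ∀ n : ℕ, φ (n + 2) τ = ∫ x in (0:ℝ)..τ, (A n x + w x * φ (n + 1) x) := by
    intro n
    have := hφk (n + 2) (by omega) τ
    simpa [hAdef] using this
  have hstep1 : Φ τ = c + (∫ x in (0:ℝ)..τ, (w x * c + ω x))
      + ∑' n, ∫ x in (0:ℝ)..τ, (A n x + w x * φ (n + 1) x) := by
    have h0 := Summable.tsum_eq_zero_add (hφsum τ hτ)
    have h1 := Summable.tsum_eq_zero_add (htailsum τ hτ)
    have hφ1' : φ 1 τ = ∫ x in (0:ℝ)..τ, (w x * c + ω x) := by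
      rw [hφ1 τ]; simp only [hφ0]
    rw [hΦ τ, h0, h1, hφ0]
    have : ∑' n, φ (n + 1 + 1) τ = ∑' n, ∫ x in (0:ℝ)..τ, (A n x + w x * φ (n + 1) x) :=
      tsum_congr fun n => hg_eq n
    rw [this, hφ1']
    ring
  -- integrability of the summands of the grand series
  have hgint : ∀ n : ℕ, IntervalIntegrable (fun x => A n x + w x * φ (n + 1) x) volume 0 τ := by
    intro n
    apply ContinuousOn.intervalIntegrable
    rw [Set.uIcc_of_le hτ]
    exact (((hAcont n).mono Set.Icc_subset_Ici_self).add
      ((hwc.mono Set.Icc_subset_Ici_self).mul ((hφc (n + 1)).mono Set.Icc_subset_Ici_self)))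
  -- summable uniform bounds for the grand series
  have hubig : Summable (fun n => τ * (C' ^ 2 * ((4 * M * τ) ^ n / (Nat.factorial n : ℝ))
      * Real.exp (L * τ))
      + C * (C' * Real.exp (L * τ) * ((M * τ) ^ (n + 1) / (Nat.factorial (n + 1) : ℝ)))) :=
    (((hu4 τ).mul_left τ).add
      (((summable_nat_add_iff 1).2 (husum τ)).mul_left C))
  have hgbound : ∀ n, ∀ x ∈ Set.Ioc (0:ℝ) τ,
      ‖A n x + w x * φ (n + 1) x‖
        ≤ τ * (C' ^ 2 * ((4 * M * τ) ^ n / (Nat.factorial n : ℝ)) * Real.exp (L * τ))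
          + C * (C' * Real.exp (L * τ) * ((M * τ) ^ (n + 1) / (Nat.factorial (n + 1) : ℝ))) := by
    intro n x hx
    have hx0 : (0:ℝ) ≤ x := hx.1.le
    have hxτ : x ≤ τ := hx.2
    refine (norm_add_le _ _).trans (add_le_add ?_ ?_)
    · refine (hAbound n x hx0).trans ?_
      have h4 : (0:ℝ) ≤ 4 * M * x := by positivity
      have h5 : 4 * M * x ≤ 4 * M * τ := by nlinarith
      have h6 : L * x ≤ L * τ := mul_le_mul_of_nonneg_left hxτ hL
      gcongr
      all_goals first
        | exact hxτ
        | exact hx0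
        | exact hx0.trans hxτ
        | exact h4
        | exact h5
        | exact h6
        | positivity
    · rw [norm_mul]
      exact mul_le_mul (hwb x hx0) (hcomp τ x (n + 1) hx0 hxτ) (norm_nonneg _)
        (by linarith : (0:ℝ) ≤ C)
  -- swap sum and integral in the grand series
  have hswapbig := aux_swap hτ hgint hubig hgbound
  -- identify the summed integrand
  have hptbig : ∀ x ∈ Set.uIcc (0:ℝ) τ,
      (∑' n, (A n x + w x * φ (n + 1) x))
        = (∫ s in (0:ℝ)..x, Φ s * Φ (x - s)) + w x * Φ x - w x * c := by
    intro x hx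
    rw [Set.uIcc_of_le hτ] at hx
    have hx0 : (0:ℝ) ≤ x := hx.1
    rw [Summable.tsum_add (hAsum x hx0) ((htailsum x hx0).mul_left (w x))]
    rw [tsum_mul_left, htail x hx0, hD x hx0]
    have : ∑' n, A n x = ∑' n, ∑ p ∈ Finset.HasAntidiagonal.antidiagonal n,
        ∫ s in (0:ℝ)..x, φ p.1 s * φ p.2 (x - s) := by simp only [hAdef]
    rw [this]
    ring
  have hstep2 : ∑' n, ∫ x in (0:ℝ)..τ, (A n x + w x * φ (n + 1) x)
      = ∫ x in (0:ℝ)..τ, ((∫ s in (0:ℝ)..x, Φ s * Φ (x - s)) + w x * Φ x - w x * c) := by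
    rw [hswapbig]
    exact intervalIntegral.integral_congr hptbig
  -- integrabilities for the final recombination
  have hint1 : IntervalIntegrable (fun x => w x * c + ω x) volume 0 τ := by
    apply ContinuousOn.intervalIntegrable
    rw [Set.uIcc_of_le hτ]
    exact ((hwc.mono Set.Icc_subset_Ici_self).mul continuousOn_const).add
      (hωc.mono Set.Icc_subset_Ici_self)
  have hint2 : IntervalIntegrable
      (fun x => (∫ s in (0:ℝ)..x, Φ s * Φ (x - s)) + w x * Φ x - w x * c) volume 0 τ := by
    apply ContinuousOn.intervalIntegrable
    rw [Set.uIcc_of_le hτ]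
    exact (((hgen Φ Φ hcont hcont).mono Set.Icc_subset_Ici_self).add
      ((hwc.mono Set.Icc_subset_Ici_self).mul (hcont.mono Set.Icc_subset_Ici_self))).sub
      ((hwc.mono Set.Icc_subset_Ici_self).mul continuousOn_const)
  -- final computation
  have hfinal : (∫ r in (0:ℝ)..τ, ((∫ s in (0:ℝ)..r, Φ s * Φ (r - s)) + w r * Φ r + ω r))
      = (∫ x in (0:ℝ)..τ, (w x * c + ω x))
        + ∫ x in (0:ℝ)..τ, ((∫ s in (0:ℝ)..x, Φ s * Φ (x - s)) + w x * Φ x - w x * c) := by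
    rw [← intervalIntegral.integral_add hint1 hint2]
    apply intervalIntegral.integral_congr
    intro x _
    ring
  rw [hstep1, hstep2, hfinal]
  ring
end

section
/- Let Ξ ⊆ ℂ be a subset that is closed in ℂ and discrete (every point of Ξ is isolated in Ξ), and suppose 0 ∉ Ξ. Then: (i) Ξ is countable; (ii) the set S := ⋃_{ξ∈Ξ} {t·ξ : t ∈ ℝ, t ≥ 1} of radial cuts is closed in ℂ; and (iii) the complement E := ℂ ∖ S is an open set containing 0 which is star-shaped about 0, i.e. for every z ∈ E and every s ∈ ℝ with 0 ≤ s ≤ 1, the point s·z belongs to E. -/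
/-- The holomorphic star at the origin: if `Ξ ⊆ ℂ` is closed, discrete, and avoids `0`,
then `Ξ` is countable, the union `S` of the radial cuts `{t·ξ : t ≥ 1}` (`ξ ∈ Ξ`) is
closed, and its complement `E` is an open set containing `0` that is star-shaped
about `0`. -/
theorem holomorphic_star_at_origin
    (Ξ : Set ℂ) (hclosed : IsClosed Ξ)
    (hdisc : ∀ ξ ∈ Ξ, ∃ U : Set ℂ, IsOpen U ∧ ξ ∈ U ∧ U ∩ Ξ = {ξ})
    (h0 : (0 : ℂ) ∉ Ξ)
    (S : Set ℂ)
    (hS : S = {z : ℂ | ∃ ξ ∈ Ξ, ∃ t : ℝ, 1 ≤ t ∧ z = (t : ℂ) * ξ})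
    (E : Set ℂ) (hE : E = Sᶜ) :
    Ξ.Countable ∧ IsClosed S ∧ IsOpen E ∧ (0 : ℂ) ∈ E ∧
      ∀ z ∈ E, ∀ s : ℝ, 0 ≤ s → s ≤ 1 → (s : ℂ) * z ∈ E := by
  -- distance from 0 to Ξ
  obtain ⟨δ, hδpos, hδ⟩ : ∃ δ > 0, Metric.ball (0 : ℂ) δ ⊆ Ξᶜ := by
    rcases Metric.isOpen_iff.1 hclosed.isOpen_compl 0 h0 with ⟨δ, hδpos, hδ⟩
    exact ⟨δ, hδpos, hδ⟩
  have hδle : ∀ ξ ∈ Ξ, δ ≤ ‖ξ‖ := by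
    intro ξ hξ
    by_contra h
    push_neg at h
    exact hδ (by simpa [Complex.dist_eq] using h) hξ
  -- (i) countability
  have hcount : Ξ.Countable := by
    have : DiscreteTopology Ξ := by
      rw [discreteTopology_iff_isOpen_singleton]
      rintro ⟨ξ, hξ⟩
      rcases hdisc ξ hξ with ⟨U, hUopen, hξU, hUΞ⟩
      refine ⟨U, hUopen, ?_⟩
      ext ⟨x, hx⟩
      simp only [Set.mem_preimage, Set.mem_singleton_iff, Subtype.ext_iff]
      constructor
      · intro hxU
        have : x ∈ U ∩ Ξ := ⟨hxU, hx⟩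
        rw [hUΞ] at this
        exact this
      · rintro rfl; exact hξU
    have : Countable Ξ := by
      rw [← TopologicalSpace.separableSpace_iff_countable]
      infer_instance
    exact Set.countable_coe_iff.1 this
  -- 0 ∉ S
  have h0S : (0 : ℂ) ∉ S := by
    rw [hS]
    rintro ⟨ξ, hξ, t, ht, htξ⟩
    have ht0 : (t : ℂ) ≠ 0 := by
      exact_mod_cast ne_of_gt (lt_of_lt_of_le one_pos ht)
    have : ξ = 0 := by
      have := htξ.symm
      exact (mul_eq_zero.1 this).resolve_left ht0
    exact h0 (this ▸ hξ)
  -- (ii) closedness of S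
  have hSclosed : IsClosed S := by
    rw [← closure_subset_iff_isClosed]
    intro z hz
    set R : ℝ := ‖z‖ + 1 with hR
    -- the compact piece
    set K : Set (ℝ × ℂ) := (Set.Icc 1 (R / δ)) ×ˢ (Ξ ∩ Metric.closedBall 0 R) with hK
    have hKcomp : IsCompact K := by
      exact (isCompact_Icc).prod
        ((isCompact_closedBall 0 R).of_isClosed_subset
          (hclosed.inter Metric.isClosed_closedBall) Set.inter_subset_right)
    have hcont : Continuous (fun p : ℝ × ℂ => (p.1 : ℂ) * p.2) := by
      exact (Complex.continuous_ofReal.comp continuous_fst).mul continuous_snd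
    have himg : IsCompact ((fun p : ℝ × ℂ => (p.1 : ℂ) * p.2) '' K) :=
      hKcomp.image hcont
    have himgS : (fun p : ℝ × ℂ => (p.1 : ℂ) * p.2) '' K ⊆ S := by
      rintro w ⟨⟨t, ξ⟩, ⟨⟨ht1, _⟩, hξ, _⟩, rfl⟩
      rw [hS]
      exact ⟨ξ, hξ, t, ht1, rfl⟩
    have hsub : S ∩ Metric.closedBall 0 R ⊆ (fun p : ℝ × ℂ => (p.1 : ℂ) * p.2) '' K := by
      rintro w ⟨hwS, hwB⟩
      rw [hS] at hwS
      obtain ⟨ξ, hξ, t, ht, rfl⟩ := hwS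
      have habs : ‖(t : ℂ) * ξ‖ = t * ‖ξ‖ := by
        rw [norm_mul, Complex.norm_real, Real.norm_eq_abs, abs_of_nonneg (le_trans zero_le_one ht)]
      have hwR : ‖(t : ℂ) * ξ‖ ≤ R := by
        simpa [Complex.dist_eq] using hwB
      have hξδ : δ ≤ ‖ξ‖ := hδle ξ hξ
      have hξR : ‖ξ‖ ≤ R := by
        calc ‖ξ‖ = 1 * ‖ξ‖ := (one_mul _).symm
          _ ≤ t * ‖ξ‖ := by
              apply mul_le_mul_of_nonneg_right ht (norm_nonneg _)
          _ ≤ R := habs ▸ hwR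
      have htR : t ≤ R / δ := by
        rw [le_div_iff₀ hδpos]
        calc t * δ ≤ t * ‖ξ‖ :=
              mul_le_mul_of_nonneg_left hξδ (le_trans zero_le_one ht)
          _ ≤ R := habs ▸ hwR
      exact ⟨(t, ξ), ⟨⟨ht, htR⟩, hξ, by simpa [Complex.dist_eq] using hξR⟩, rfl⟩
    -- z is in the closure of the bounded piece
    have hznear : z ∈ closure (S ∩ Metric.closedBall 0 R) := by
      have hcover : S ⊆ (S ∩ Metric.closedBall 0 R) ∪ (Metric.closedBall (0:ℂ) R)ᶜ := by
        intro w hw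
        by_cases h : w ∈ Metric.closedBall (0:ℂ) R
        · exact Or.inl ⟨hw, h⟩
        · exact Or.inr h
      have := closure_mono hcover hz
      rw [closure_union] at this
      rcases this with h | h
      · exact h
      · exfalso
        have : z ∈ closure {w : ℂ | R ≤ ‖w‖} := by
          refine closure_mono ?_ h
          intro w hw
          simp only [Metric.mem_closedBall, not_le, Complex.dist_eq, sub_zero,
            Set.mem_compl_iff] at hw
          exact le_of_lt hw
        have hcl : IsClosed {w : ℂ | R ≤ ‖w‖} := by
          have : {w : ℂ | R ≤ ‖w‖} = norm ⁻¹' (Set.Ici R) := rfl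
          rw [this]
          exact IsClosed.preimage continuous_norm isClosed_Ici
        rw [hcl.closure_eq] at this
        have : R ≤ ‖z‖ := this
        linarith [hR ▸ this]
    have : z ∈ (fun p : ℝ × ℂ => (p.1 : ℂ) * p.2) '' K := by
      have := closure_mono hsub hznear
      rwa [himg.isClosed.closure_eq] at this
    exact himgS this
  refine ⟨hcount, hSclosed, ?_, ?_, ?_⟩
  · rw [hE]; exact hSclosed.isOpen_compl
  · rw [hE]; exact h0S
  · intro z hz s hs0 hs1
    rw [hE] at hz ⊢
    intro hsz
    rcases eq_or_lt_of_le hs0 with rfl | hs0'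
    · rw [Complex.ofReal_zero, zero_mul] at hsz
      exact h0S hsz
    rw [hS] at hsz
    obtain ⟨ξ, hξ, t, ht, htξ⟩ := hsz
    apply hz
    rw [hS]
    refine ⟨ξ, hξ, t / s, ?_, ?_⟩
    · rw [le_div_iff₀ hs0']
      calc 1 * s = s := one_mul s
        _ ≤ 1 := hs1
        _ ≤ t := ht
    · have hs0c : (s : ℂ) ≠ 0 := by exact_mod_cast ne_of_gt hs0'
      have : (s : ℂ) * z = (t : ℂ) * ξ := htξ
      rw [Complex.ofReal_div]
      field_simp
      linear_combination this
end
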